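/- arXiv:2409.01598 — 3 statements merged into one kernel-verified Lean document; each statement's English description precedes it below -/
import Mathlib

section
/- Let G be a first order endotactic mass-action system on ℕ₀^d with average flux matrix A. Then every eigenvalue of A has nonpositive real part; moreover all eigenvalues of A have strictly negative real part if and only if G equals its weakly connected component containing the zero complex (G = G⁰). -/
open Matrix Finset
open scoped Matrix Classical

abbrev Vec (d : ℕ) := Fin d → ℝ
abbrev Edge (d : ℕ) := Vec d × Vec d

/-- Sources of edges whose reaction vector is not orthogonal to `u`. -/
def srcU {d : ℕ} (E : Finset (Edge d)) (u : Vec d) : Set (Vec d) :=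
  {y | ∃ y', (y, y') ∈ E ∧ (y' - y) ⬝ᵥ u ≠ 0}

/-- `G` is `u`-endotactic: no `u`-endotacticity violating reaction. -/
def uEndotactic {d : ℕ} (E : Finset (Edge d)) (u : Vec d) : Prop :=
  ¬ ∃ y y', (y, y') ∈ E ∧ 0 < (y' - y) ⬝ᵥ u ∧ ∀ z ∈ srcU E u, z ⬝ᵥ u ≤ y ⬝ᵥ u

def Endotactic {d : ℕ} (E : Finset (Edge d)) : Prop := ∀ u : Vec d, uEndotactic E u

/-- Reachability by a directed path. -/
def Reach {d : ℕ} (E : Finset (Edge d)) : Vec d → Vec d → Prop :=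
  Relation.ReflTransGen (fun a b => (a, b) ∈ E)

def IsEig {d : ℕ} (A : Matrix (Fin d) (Fin d) ℝ) (μ : ℂ) : Prop :=
  ∃ v : Fin d → ℂ, v ≠ 0 ∧ (A.map Complex.ofReal).mulVec v = μ • v

def InV {d : ℕ} (E : Finset (Edge d)) (y : Vec d) : Prop :=
  ∃ e ∈ E, e.1 = y ∨ e.2 = y

def IsSource {d : ℕ} (E : Finset (Edge d)) (y : Vec d) : Prop :=
  ∃ y', (y, y') ∈ E

def WReach {d : ℕ} (E : Finset (Edge d)) : Vec d → Vec d → Prop :=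
  Relation.ReflTransGen (fun a b => (a, b) ∈ E ∨ (b, a) ∈ E)

section Aux
variable {d : ℕ}

lemma dot_single (v : Vec d) (j : Fin d) : (Pi.single j 1 : Vec d) ⬝ᵥ v = v j := by
  simp [dotProduct, Pi.single_apply]

lemma dot_ones (v : Vec d) : v ⬝ᵥ (fun _ => (1:ℝ)) = ∑ k, v k := by simp [dotProduct]

lemma sum_single (j : Fin d) : ∑ k, (Pi.single j 1 : Vec d) k = 1 := by
  simp [Pi.single_apply]

lemma vec_nonneg {y : Vec d} (hn : ∀ i, ∃ n : ℕ, y i = (n:ℝ)) (i : Fin d) : 0 ≤ y i := by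
  obtain ⟨n, hn⟩ := hn i; rw [hn]; positivity

lemma vec_one_le {y : Vec d} (hn : ∀ i, ∃ n : ℕ, y i = (n:ℝ)) {i : Fin d} (h : y i ≠ 0) :
    1 ≤ y i := by
  obtain ⟨n, hni⟩ := hn i
  rw [hni] at h ⊢
  exact_mod_cast Nat.one_le_iff_ne_zero.2 (by exact_mod_cast h)

lemma vec_classify {y : Vec d} (hn : ∀ i, ∃ n : ℕ, y i = (n:ℝ)) (hs : ∑ i, y i ≤ 1) :
    y = 0 ∨ ∃ k, y = (Pi.single k 1 : Vec d) := by
  by_cases h0 : ∀ i, y i = 0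
  · exact Or.inl (funext h0)
  · right
    push_neg at h0
    obtain ⟨k, hk⟩ := h0
    have h1 : 1 ≤ y k := vec_one_le hn hk
    have hz : ∀ j, j ≠ k → y j = 0 := by
      intro j hj
      by_contra hjz
      have h1j : 1 ≤ y j := vec_one_le hn hjz
      have hsub : ∑ i ∈ ({j, k} : Finset (Fin d)), y i ≤ ∑ i, y i :=
        Finset.sum_le_sum_of_subset_of_nonneg (Finset.subset_univ _)
          (fun i _ _ => vec_nonneg hn i)
      rw [Finset.sum_pair hj] at hsub
      linarith
    have hk1 : y k = 1 := by
      have : y k ≤ ∑ i, y i :=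
        Finset.single_le_sum (fun i _ => vec_nonneg hn i) (Finset.mem_univ k)
      linarith
    refine ⟨k, funext fun j => ?_⟩
    by_cases hjk : j = k
    · subst hjk; simpa [Pi.single_apply] using hk1
    · simp [Pi.single_apply, hjk, hz j hjk]

lemma wreach_symm {E : Finset (Edge d)} {a b : Vec d} (h : WReach E a b) : WReach E b a := by
  induction h with
  | refl => exact Relation.ReflTransGen.refl
  | tail h₁ h₂ ih => exact Relation.ReflTransGen.head (Or.symm h₂) ih

lemma rowdot {E : Finset (Edge d)} {κ : Edge d → ℝ} {A : Matrix (Fin d) (Fin d) ℝ}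
    (hA : ∀ i j, A i j =
      ∑ e ∈ E.filter (fun e => e.1 = (Pi.single i 1 : Vec d)), κ e * (e.2 j - e.1 j))
    (v : Vec d) (j : Fin d) :
    ∑ k, A j k * v k
      = ∑ e ∈ E.filter (fun e => e.1 = (Pi.single j 1 : Vec d)), κ e * (e.2 ⬝ᵥ v - v j) := by
  simp only [hA, Finset.sum_mul]
  rw [Finset.sum_comm]
  refine Finset.sum_congr rfl fun e he => ?_
  have h1 : e.1 = (Pi.single j 1 : Vec d) := (Finset.mem_filter.mp he).2
  have hrw : ∀ k, κ e * (e.2 k - e.1 k) * v k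
      = κ e * (e.2 k * v k) - κ e * (e.1 k * v k) := fun k => by ring
  rw [Finset.sum_congr rfl fun k _ => hrw k, Finset.sum_sub_distrib,
    ← Finset.mul_sum, ← Finset.mul_sum, ← mul_sub]
  congr 1
  have : ∑ k, e.1 k * v k = v j := by
    rw [h1]; simpa [dotProduct] using dot_single v j
  rw [this]
  rfl

end Aux
lemma dot_single' {d : ℕ} (v : Vec d) (j : Fin d) : v ⬝ᵥ (Pi.single j 1 : Vec d) = v j := by
  simp [dotProduct, Pi.single_apply]

section Mid
variable {d : ℕ} {E : Finset (Edge d)} {κ : Edge d → ℝ} {A : Matrix (Fin d) (Fin d) ℝ}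

lemma target_small (hfo : ∀ y, IsSource E y → ∑ i, y i ≤ 1) (hendo : Endotactic E)
    {i : Fin d} {b : Vec d} (hmem : ((Pi.single i 1 : Vec d), b) ∈ E) :
    ∑ k, b k ≤ 1 := by
  by_contra h
  push_neg at h
  refine hendo (fun _ => (1:ℝ)) ⟨Pi.single i 1, b, hmem, ?_, ?_⟩
  · rw [sub_dotProduct, dot_ones, dot_ones, sum_single]
    linarith
  · intro z hz
    obtain ⟨y', hy', -⟩ := hz
    have hzs : ∑ k, z k ≤ 1 := hfo z ⟨y', hy'⟩
    rw [dot_ones, dot_ones, sum_single]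
    exact hzs

lemma target_classify (hnat : ∀ y, InV E y → ∀ i, ∃ n : ℕ, y i = (n : ℝ))
    (hfo : ∀ y, IsSource E y → ∑ i, y i ≤ 1) (hendo : Endotactic E)
    {i : Fin d} {b : Vec d} (hmem : ((Pi.single i 1 : Vec d), b) ∈ E) :
    b = 0 ∨ ∃ k, b = (Pi.single k 1 : Vec d) :=
  vec_classify (hnat b ⟨_, hmem, Or.inr rfl⟩) (target_small hfo hendo hmem)

lemma source_classify (hnat : ∀ y, InV E y → ∀ i, ∃ n : ℕ, y i = (n : ℝ))
    (hfo : ∀ y, IsSource E y → ∑ i, y i ≤ 1)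
    {a b : Vec d} (hmem : (a, b) ∈ E) :
    a = 0 ∨ ∃ k, a = (Pi.single k 1 : Vec d) :=
  vec_classify (hnat a ⟨_, hmem, Or.inl rfl⟩) (hfo a ⟨b, hmem⟩)

lemma species_source (hnat : ∀ y, InV E y → ∀ i, ∃ n : ℕ, y i = (n : ℝ))
    (hfo : ∀ y, IsSource E y → ∑ i, y i ≤ 1)
    (hnored : ∀ i : Fin d, ∃ e ∈ E, e.2 i ≠ e.1 i)
    (hendo : Endotactic E) (j : Fin d) :
    ∃ b, ((Pi.single j 1 : Vec d), b) ∈ E := by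
  by_contra h
  push_neg at h
  obtain ⟨e, heE, hej⟩ := hnored j
  have hmem : (e.1, e.2) ∈ E := by simpa using heE
  have h1j : e.1 j = 0 := by
    rcases source_classify hnat hfo hmem with h0 | ⟨m, hm⟩
    · rw [h0]; rfl
    · rcases eq_or_ne m j with rfl | hmj
      · exact absurd (hm ▸ hmem) (h e.2)
      · rw [hm]; exact Pi.single_eq_of_ne (Ne.symm hmj) 1
  have h2j : 1 ≤ e.2 j := by
    refine vec_one_le (hnat e.2 ⟨e, heE, Or.inr rfl⟩) ?_
    rw [h1j] at hej; exact hej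
  refine hendo (Pi.single j 1) ⟨e.1, e.2, hmem, ?_, ?_⟩
  · rw [sub_dotProduct, dot_single', dot_single', h1j]
    linarith
  · intro z hz
    obtain ⟨y', hy', -⟩ := hz
    have hzj : z j = 0 := by
      rcases source_classify hnat hfo hy' with h0 | ⟨m, hm⟩
      · rw [h0]; rfl
      · rcases eq_or_ne m j with rfl | hmj
        · exact absurd (hm ▸ hy') (h y')
        · rw [hm]; exact Pi.single_eq_of_ne (Ne.symm hmj) 1
    rw [dot_single', dot_single', hzj, h1j]

end Mid
section NS
variable {d : ℕ} {E : Finset (Edge d)} {κ : Edge d → ℝ} {A : Matrix (Fin d) (Fin d) ℝ}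

lemma row_zero (hA : ∀ i j, A i j =
      ∑ e ∈ E.filter (fun e => e.1 = (Pi.single i 1 : Vec d)), κ e * (e.2 j - e.1 j))
    {w : Fin d → ℝ} (hw : A.mulVec w = 0) (j : Fin d) :
    ∑ e ∈ E.filter (fun e => e.1 = (Pi.single j 1 : Vec d)), κ e * (e.2 ⬝ᵥ w - w j) = 0 := by
  rw [← rowdot hA w j]
  have h := congrFun hw j
  simpa [Matrix.mulVec, dotProduct] using h

lemma NS (hκ : ∀ e ∈ E, 0 < κ e)
    (hnat : ∀ y, InV E y → ∀ i, ∃ n : ℕ, y i = (n : ℝ))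
    (hfo : ∀ y, IsSource E y → ∑ i, y i ≤ 1)
    (hnored : ∀ i : Fin d, ∃ e ∈ E, e.2 i ≠ e.1 i)
    (hendo : Endotactic E)
    (hA : ∀ i j, A i j =
      ∑ e ∈ E.filter (fun e => e.1 = (Pi.single i 1 : Vec d)), κ e * (e.2 j - e.1 j))
    (hWR : ∀ e ∈ E, WReach E 0 e.1)
    (v : Fin d → ℝ) (hv : A.mulVec v = 0) : v = 0 := by
  by_contra hv0
  -- get a maximizing index
  rcases isEmpty_or_nonempty (Fin d) with hF | hF
  · exact hv0 (funext fun i => (hF.false i).elim)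
  obtain ⟨j₀, -, hj₀⟩ := Finset.exists_max_image Finset.univ (fun k => |v k|) Finset.univ_nonempty
  have hj₀' : ∀ k, |v k| ≤ |v j₀| := fun k => hj₀ k (Finset.mem_univ k)
  have hM0 : 0 < |v j₀| := by
    rcases (abs_nonneg (v j₀)).lt_or_eq with h | h
    · exact h
    · exfalso; apply hv0; funext k
      have := hj₀' k; rw [← h] at this
      exact abs_nonpos_iff.mp this
  -- normalize sign
  set w : Fin d → ℝ := if 0 ≤ v j₀ then v else -v with hwdef
  have hww : A.mulVec w = 0 := by
    rw [hwdef]; split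
    · exact hv
    · rw [Matrix.mulVec_neg, hv, neg_zero]
  set M : ℝ := |v j₀| with hMdef
  have hwj₀ : w j₀ = M := by
    rw [hwdef, hMdef]; split
    · exact (abs_of_nonneg (by assumption)).symm
    · rename_i h; rw [abs_of_neg (lt_of_not_ge h)]; rfl
  have hwle : ∀ k, w k ≤ M := by
    intro k
    have : |w k| = |v k| := by rw [hwdef]; split <;> simp
    calc w k ≤ |w k| := le_abs_self _
    _ = |v k| := this
    _ ≤ M := hj₀' k
  -- Step 1
  have step1 : ∀ m, w m = M → ∀ b, ((Pi.single m 1 : Vec d), b) ∈ E →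
      ∃ k, b = (Pi.single k 1 : Vec d) ∧ w k = M := by
    intro m hm b hb
    have hrow := row_zero hA hww m
    have hterms : ∀ e ∈ E.filter (fun e => e.1 = (Pi.single m 1 : Vec d)),
        κ e * (e.2 ⬝ᵥ w - w m) ≤ 0 := by
      intro e he
      obtain ⟨heE, he1⟩ := Finset.mem_filter.mp he
      have hmemE : ((Pi.single m 1 : Vec d), e.2) ∈ E := by
        rw [← he1]; simpa using heE
      have hnn : ∀ k, 0 ≤ e.2 k := vec_nonneg (hnat e.2 ⟨e, heE, Or.inr rfl⟩)
      have hsum : ∑ k, e.2 k ≤ 1 := target_small hfo hendo hmemE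
      have hdot : e.2 ⬝ᵥ w ≤ w m := by
        rw [hm]
        calc e.2 ⬝ᵥ w = ∑ k, e.2 k * w k := rfl
        _ ≤ ∑ k, e.2 k * M :=
            Finset.sum_le_sum fun k _ => mul_le_mul_of_nonneg_left (hwle k) (hnn k)
        _ = (∑ k, e.2 k) * M := (Finset.sum_mul _ _ _).symm
        _ ≤ 1 * M := mul_le_mul_of_nonneg_right hsum hM0.le
        _ = M := one_mul M
      have hκe := hκ e heE
      nlinarith
    have hall := (Finset.sum_eq_zero_iff_of_nonpos hterms).mp hrow
    have hmemF : ((Pi.single m 1 : Vec d), b) ∈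
        E.filter (fun e => e.1 = (Pi.single m 1 : Vec d)) :=
      Finset.mem_filter.mpr ⟨hb, rfl⟩
    have h0 := hall _ hmemF
    have hκb := hκ _ hb
    have hbw : b ⬝ᵥ w = M := by
      rcases mul_eq_zero.mp h0 with h | h
      · exact absurd h hκb.ne'
      · have : b ⬝ᵥ w = w m := by linarith [sub_eq_zero.mp h]
        rw [this, hm]
    have hnnb : ∀ k, 0 ≤ b k := vec_nonneg (hnat b ⟨_, hb, Or.inr rfl⟩)
    have hble : ∑ k, b k ≤ 1 := target_small hfo hendo hb
    have h1 : 1 ≤ ∑ k, b k := by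
      by_contra hc
      push_neg at hc
      have hle : b ⬝ᵥ w ≤ (∑ k, b k) * M := by
        calc b ⬝ᵥ w = ∑ k, b k * w k := rfl
        _ ≤ ∑ k, b k * M :=
            Finset.sum_le_sum fun k _ => mul_le_mul_of_nonneg_left (hwle k) (hnnb k)
        _ = (∑ k, b k) * M := (Finset.sum_mul _ _ _).symm
      nlinarith
    rcases vec_classify (hnat b ⟨_, hb, Or.inr rfl⟩) hble with h0' | ⟨k, hk⟩
    · rw [h0'] at h1; simp at h1; linarith
    · refine ⟨k, hk, ?_⟩
      rw [hk, dot_single] at hbw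
      exact hbw
  -- the indicator direction
  set u : Vec d := fun k => if w k = M then 1 else 0 with hudef
  have hu_nonneg : ∀ k, 0 ≤ u k := by
    intro k; rw [hudef]; dsimp only; split <;> norm_num
  have hdotnn : ∀ y : Vec d, (∀ k, 0 ≤ y k) → 0 ≤ y ⬝ᵥ u :=
    fun y hy => Finset.sum_nonneg fun k _ => mul_nonneg (hy k) (hu_nonneg k)
  have hsrcnn : ∀ a b : Vec d, (a, b) ∈ E → 0 ≤ a ⬝ᵥ u := fun a b hab =>
    hdotnn a (vec_nonneg (hnat a ⟨_, hab, Or.inl rfl⟩))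
  -- Step 2 : monotonicity along edges
  have hmono : ∀ a b : Vec d, (a, b) ∈ E → b ⬝ᵥ u ≤ a ⬝ᵥ u := by
    by_contra hc
    push_neg at hc
    obtain ⟨a, b, hab, hlt⟩ := hc
    refine hendo u ⟨a, b, hab, ?_, ?_⟩
    · rw [sub_dotProduct]; linarith
    · intro z hz
      obtain ⟨c, hzc, hne⟩ := hz
      rcases source_classify hnat hfo hzc with h0 | ⟨m, hm⟩
      · rw [h0, zero_dotProduct]
        exact hsrcnn a b hab
      · subst hm
        rw [dot_single]
        by_cases hmM : w m = M
        · obtain ⟨k, hck, hk⟩ := step1 m hmM c hzc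
          exfalso
          apply hne
          rw [sub_dotProduct, hck, dot_single, dot_single, hudef]
          simp [hmM, hk]
        · have : u m = 0 := by rw [hudef]; simp [hmM]
          rw [this]
          exact hsrcnn a b hab
  -- Step 2' : backwards propagation of zero
  have hfwd : ∀ a b : Vec d, (a, b) ∈ E → a ⬝ᵥ u = 0 → b ⬝ᵥ u = 0 := by
    intro a b hab ha
    have h1 := hmono a b hab
    have h2 : 0 ≤ b ⬝ᵥ u := hdotnn b (vec_nonneg (hnat b ⟨_, hab, Or.inr rfl⟩))
    linarith
  have hbwd : ∀ a b : Vec d, (a, b) ∈ E → b ⬝ᵥ u = 0 → a ⬝ᵥ u = 0 := by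
    intro a b hab hb
    rcases source_classify hnat hfo hab with h0 | ⟨m, hm⟩
    · rw [h0, zero_dotProduct]
    · subst hm
      by_cases hmM : w m = M
      · obtain ⟨k, hck, hk⟩ := step1 m hmM b hab
        rw [hck, dot_single, hudef] at hb
        simp [hk] at hb
      · rw [dot_single, hudef]; simp [hmM]
  -- Step 3 : invariant along weak reachability
  have hinv : ∀ y, WReach E 0 y → y ⬝ᵥ u = 0 := by
    intro y h
    induction h with
    | refl => exact zero_dotProduct u
    | tail h₁ hstep ih =>
      rcases hstep with hE | hE
      · exact hfwd _ _ hE ih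
      · exact hbwd _ _ hE ih
  obtain ⟨b, hb⟩ := species_source hnat hfo hnored hendo j₀
  have hreach : WReach E 0 (Pi.single j₀ 1 : Vec d) := hWR _ hb
  have := hinv _ hreach
  rw [dot_single, hudef] at this
  simp [hwj₀] at this

end NS
section Sing
variable {d : ℕ} {E : Finset (Edge d)} {κ : Edge d → ℝ} {A : Matrix (Fin d) (Fin d) ℝ}

lemma sing (hκ : ∀ e ∈ E, 0 < κ e)
    (hnat : ∀ y, InV E y → ∀ i, ∃ n : ℕ, y i = (n : ℝ))
    (hfo : ∀ y, IsSource E y → ∑ i, y i ≤ 1)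
    (hendo : Endotactic E)
    (hA : ∀ i j, A i j =
      ∑ e ∈ E.filter (fun e => e.1 = (Pi.single i 1 : Vec d)), κ e * (e.2 j - e.1 j))
    (i : Fin d) (hni : ¬ WReach E 0 (Pi.single i 1 : Vec d)) :
    ∃ v : Fin d → ℝ, v ≠ 0 ∧ A.mulVec v = 0 := by
  set v : Fin d → ℝ :=
    fun k => if WReach E (Pi.single i 1 : Vec d) (Pi.single k 1 : Vec d) then 1 else 0 with hvdef
  have hvi : v i = 1 := by simp only [hvdef]; exact if_pos Relation.ReflTransGen.refl
  refine ⟨v, ?_, ?_⟩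
  · intro h
    have := congrFun h i
    rw [hvi] at this
    simpa using this
  · funext j
    have hformula : A.mulVec v j
        = ∑ e ∈ E.filter (fun e => e.1 = (Pi.single j 1 : Vec d)), κ e * (e.2 ⬝ᵥ v - v j) := by
      rw [← rowdot hA v j]
      rfl
    rw [hformula]
    refine Finset.sum_eq_zero fun e he => ?_
    obtain ⟨heE, he1⟩ := Finset.mem_filter.mp he
    have hmemE : ((Pi.single j 1 : Vec d), e.2) ∈ E := by
      rw [← he1]; simpa using heE
    rcases target_classify hnat hfo hendo hmemE with h0 | ⟨k, hk⟩
    · -- target is the zero complex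
      have hvj : v j = 0 := by
        rw [hvdef]
        simp only [ite_eq_right_iff, one_ne_zero]
        intro hR
        exact hni (wreach_symm (hR.tail (Or.inl (h0 ▸ hmemE))))
      rw [h0, zero_dotProduct, hvj, sub_zero, mul_zero]
    · -- target is a monomolecular complex e_k
      rw [hk, dot_single]
      have : v k = v j := by
        rw [hvdef]
        by_cases hWj : WReach E (Pi.single i 1 : Vec d) (Pi.single j 1 : Vec d)
        · have hWk : WReach E (Pi.single i 1 : Vec d) (Pi.single k 1 : Vec d) :=
            hWj.tail (Or.inl (hk ▸ hmemE))
          simp [hWj, hWk]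
        · have hWk : ¬ WReach E (Pi.single i 1 : Vec d) (Pi.single k 1 : Vec d) := by
            intro hWk
            exact hWj (hWk.tail (Or.inr (hk ▸ hmemE)))
          simp [hWj, hWk]
      rw [this, sub_self, mul_zero]

lemma gersh (hF1 : ∀ i j, i ≠ j → 0 ≤ A i j) (hF2 : ∀ i, ∑ j, A i j ≤ 0)
    (μ : ℂ) (hμ : IsEig A μ) : μ.re ≤ 0 ∧ (¬ μ.re < 0 → μ = 0) := by
  obtain ⟨v, hv0, hveq⟩ := hμ
  have hne : ∃ i, v i ≠ 0 := by
    by_contra h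
    push_neg at h
    exact hv0 (funext h)
  obtain ⟨i₀, hi₀⟩ := hne
  haveI : Nonempty (Fin d) := ⟨i₀⟩
  obtain ⟨k, -, hk⟩ := Finset.exists_max_image Finset.univ
    (fun j => ‖v j‖) Finset.univ_nonempty
  have hk' : ∀ j, ‖v j‖ ≤ ‖v k‖ := fun j => hk j (Finset.mem_univ j)
  have hvk : 0 < ‖v k‖ :=
    lt_of_lt_of_le (norm_pos_iff.mpr hi₀) (hk' i₀)
  have hrowk : ∑ j, ((A k j : ℂ)) * v j = μ * v k := by
    have h := congrFun hveq k
    simpa [Matrix.mulVec, dotProduct, Matrix.map_apply] using h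
  have hsplit : (μ - (A k k : ℂ)) * v k = ∑ j ∈ Finset.univ.erase k, (A k j : ℂ) * v j := by
    have h2 : (A k k : ℂ) * v k + ∑ j ∈ Finset.univ.erase k, (A k j : ℂ) * v j
        = ∑ j, (A k j : ℂ) * v j :=
      Finset.add_sum_erase Finset.univ (fun j => (A k j : ℂ) * v j) (Finset.mem_univ k)
    rw [sub_mul, ← hrowk, ← h2]
    ring
  set r : ℝ := ∑ j ∈ Finset.univ.erase k, A k j with hrdef
  have hrnn : 0 ≤ r :=
    Finset.sum_nonneg fun j hj => hF1 k j (Ne.symm (Finset.mem_erase.mp hj).1)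
  have hrle : A k k + r ≤ 0 := by
    have := hF2 k
    rwa [← Finset.add_sum_erase _ _ (Finset.mem_univ k)] at this
  have habs : ‖μ - (A k k : ℂ)‖ * ‖v k‖ ≤ r * ‖v k‖ := by
    calc ‖μ - (A k k : ℂ)‖ * ‖v k‖
        = ‖(μ - (A k k : ℂ)) * v k‖ := (norm_mul _ _).symm
    _ = ‖∑ j ∈ Finset.univ.erase k, (A k j : ℂ) * v j‖ := by rw [hsplit]
    _ ≤ ∑ j ∈ Finset.univ.erase k, ‖(A k j : ℂ) * v j‖ :=
        norm_sum_le _ _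
    _ ≤ ∑ j ∈ Finset.univ.erase k, A k j * ‖v k‖ := by
        refine Finset.sum_le_sum fun j hj => ?_
        have hAnn : 0 ≤ A k j := hF1 k j (Ne.symm (Finset.mem_erase.mp hj).1)
        rw [norm_mul, Complex.norm_of_nonneg hAnn]
        exact mul_le_mul_of_nonneg_left (hk' j) hAnn
    _ = r * ‖v k‖ := (Finset.sum_mul _ _ _).symm
  have hbound : ‖μ - (A k k : ℂ)‖ ≤ r := le_of_mul_le_mul_right habs hvk
  have hsq : (μ.re - A k k) ^ 2 + μ.im ^ 2 ≤ (A k k) ^ 2 := by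
    have h1 : (‖μ - (A k k : ℂ)‖) ^ 2 = (μ.re - A k k) ^ 2 + μ.im ^ 2 := by
      rw [Complex.sq_norm, Complex.normSq_apply]
      simp [Complex.sub_re, Complex.sub_im, Complex.ofReal_re, Complex.ofReal_im]
      ring
    nlinarith [norm_nonneg (μ - (A k k : ℂ))]
  have hAkk : A k k ≤ 0 := by linarith
  have hre : μ.re ≤ 0 := by nlinarith [sq_nonneg μ.re, sq_nonneg μ.im]
  refine ⟨hre, fun hnlt => ?_⟩
  have hre0 : μ.re = 0 := le_antisymm hre (not_lt.mp hnlt)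
  have him : μ.im = 0 := by nlinarith [sq_nonneg μ.im]
  exact Complex.ext (by simpa using hre0) (by simpa using him)

end Sing
/-- For a first order endotactic mass-action system, all eigenvalues of the
average flux matrix `A` have nonpositive real part, and they all have strictly
negative real part iff the reaction graph equals the weakly connected
component of the zero complex. -/
theorem stmt16 {d : ℕ} (E : Finset (Edge d)) (κ : Edge d → ℝ)
    (hsimple : ∀ e ∈ E, e.1 ≠ e.2)
    (hκ : ∀ e ∈ E, 0 < κ e)
    (hnat : ∀ y, InV E y → ∀ i, ∃ n : ℕ, y i = (n : ℝ))
    (hfo : ∀ y, IsSource E y → ∑ i, y i ≤ 1)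
    (hnored : ∀ i : Fin d, ∃ e ∈ E, e.2 i ≠ e.1 i)
    (hendo : Endotactic E)
    (A : Matrix (Fin d) (Fin d) ℝ)
    (hA : ∀ i j, A i j =
      ∑ e ∈ E.filter (fun e => e.1 = (Pi.single i 1 : Vec d)), κ e * (e.2 j - e.1 j)) :
    (∀ μ : ℂ, IsEig A μ → μ.re ≤ 0) ∧
    ((∀ μ : ℂ, IsEig A μ → μ.re < 0) ↔ ∀ e ∈ E, WReach E 0 e.1) := by
  have hF1 : ∀ i j, i ≠ j → 0 ≤ A i j := by
    intro i j hij
    rw [hA]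
    refine Finset.sum_nonneg fun e he => ?_
    obtain ⟨heE, he1⟩ := Finset.mem_filter.mp he
    have h1 : e.1 j = 0 := by rw [he1]; exact Pi.single_eq_of_ne (Ne.symm hij) 1
    have h2 : 0 ≤ e.2 j := vec_nonneg (hnat e.2 ⟨e, heE, Or.inr rfl⟩) j
    have h3 := (hκ e heE).le
    rw [h1]
    nlinarith
  have hF2 : ∀ i, ∑ j, A i j ≤ 0 := by
    intro i
    have h := rowdot hA (fun _ => (1:ℝ)) i
    simp only [mul_one] at h
    rw [h]
    refine Finset.sum_nonpos fun e he => ?_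
    obtain ⟨heE, he1⟩ := Finset.mem_filter.mp he
    have hmemE : ((Pi.single i 1 : Vec d), e.2) ∈ E := by rw [← he1]; simpa using heE
    have hsum := target_small hfo hendo hmemE
    have hκe := hκ e heE
    rw [dot_ones]
    nlinarith
  have hG : ∀ μ : ℂ, IsEig A μ → μ.re ≤ 0 ∧ (¬ μ.re < 0 → μ = 0) :=
    fun μ hμ => gersh hF1 hF2 μ hμ
  refine ⟨fun μ hμ => (hG μ hμ).1, ?_, ?_⟩
  · -- strict stability implies the graph is weakly connected to 0
    intro hs e he
    by_contra hnr
    rcases source_classify hnat hfo (show (e.1, e.2) ∈ E by simpa using he) with h0 | ⟨i, hi⟩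
    · rw [h0] at hnr; exact hnr Relation.ReflTransGen.refl
    · rw [hi] at hnr
      obtain ⟨v, hv0, hveq⟩ := sing hκ hnat hfo hendo hA i hnr
      have heig : IsEig A 0 := by
        refine ⟨fun k => (v k : ℂ), ?_, ?_⟩
        · intro h
          apply hv0
          funext k
          have hk := congrFun h k
          rw [Pi.zero_apply] at hk ⊢
          exact_mod_cast hk
        · funext j
          have h0 := congrFun hveq j
          simp only [Matrix.mulVec, dotProduct, Matrix.map_apply, Pi.zero_apply] at h0 ⊢
          simp only [zero_smul, Pi.zero_apply]
          exact_mod_cast congrArg (Complex.ofReal) h0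
      have := hs 0 heig
      simp at this
  · -- weak connectivity to 0 implies strict stability
    intro hWR μ hμ
    by_contra hlt
    have hμ0 : μ = 0 := (hG μ hμ).2 hlt
    subst hμ0
    obtain ⟨v, hv0, hveq⟩ := hμ
    have hveq0 : (A.map Complex.ofReal).mulVec v = 0 := by rw [hveq, zero_smul]
    have hdetC : (A.map Complex.ofReal).det = 0 :=
      Matrix.exists_mulVec_eq_zero_iff.mp ⟨v, hv0, hveq0⟩
    have hdetR : A.det = 0 := by
      have hmap : ((A.det : ℝ) : ℂ) = (A.map Complex.ofReal).det := by
        exact RingHom.map_det Complex.ofRealHom A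
      rw [hdetC] at hmap
      exact_mod_cast hmap
    obtain ⟨w, hw0, hw⟩ := Matrix.exists_mulVec_eq_zero_iff.mpr hdetR
    exact hw0 (NS hκ hnat hfo hnored hendo hA hWR w hw)
end

section
/- Let G be a first order endotactic mass-action system on ℕ₀^d. Then in each stoichiometric compatibility class (x₀ + S_G) ∩ ℝ₊^d, where S_G = span{y'−y : (y,y') ∈ E}, the ODE ẋ = xA + b has exactly one equilibrium, and this equilibrium is entrywise positive whenever the class has nonempty interior in x₀ + S_G relative to ℝ₊^d (i.e., is a positive stoichiometric compatibility class). -/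
open Matrix Finset
open scoped Matrix Classical

/-- The stoichiometric subspace: the span of the reaction vectors. -/
def stoichSpan (d : ℕ) (E : Finset (Edge d)) : Submodule ℝ (Vec d) :=
  Submodule.span ℝ {v | ∃ e ∈ E, v = e.2 - e.1}

namespace S17

variable {d : ℕ}

/-- unit vector -/
noncomputable def sg (i : Fin d) : Vec d := Pi.single i 1

lemma sg_apply (i j : Fin d) : sg i j = if j = i then 1 else 0 := by
  simp [sg, Pi.single_apply]

lemma sg_dot (i : Fin d) (u : Vec d) : sg i ⬝ᵥ u = u i := by
  simp [sg, single_dotProduct]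

lemma dot_sg (i : Fin d) (u : Vec d) : u ⬝ᵥ sg i = u i := by
  simp [sg, dotProduct_single]

lemma sg_inj {i j : Fin d} (h : sg i = sg j) : i = j := by
  by_contra hne
  have := congrFun h i
  rw [sg_apply, sg_apply, if_pos rfl, if_neg (by simpa using fun h => hne h)] at this
  norm_num at this

lemma sg_ne_zero (i : Fin d) : sg i ≠ 0 := by
  intro h
  have := congrFun h i
  rw [sg_apply, if_pos rfl] at this
  norm_num at this

/-- a natural vector with sum ≤ 1 is 0 or a unit vector -/
lemma nat_small {y : Vec d} (hy : ∀ i, ∃ n : ℕ, y i = (n : ℝ)) (hs : ∑ i, y i ≤ 1) :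
    y = 0 ∨ ∃ i, y = sg i := by
  choose n hn using hy
  have hnn : ∀ i, (0:ℝ) ≤ y i := fun i => by rw [hn i]; positivity
  by_cases h0 : ∀ i, y i = 0
  · exact Or.inl (funext h0)
  · push_neg at h0
    obtain ⟨i, hi⟩ := h0
    have h1 : (1:ℝ) ≤ y i := by
      rw [hn i]; rw [hn i] at hi
      exact_mod_cast Nat.one_le_iff_ne_zero.2 (by exact_mod_cast fun h => hi (by rw [h]; norm_num))
    have hle : y i ≤ ∑ j, y j := Finset.single_le_sum (fun j _ => hnn j) (mem_univ i)
    have hrest : ∑ j ∈ univ.erase i, y j = 0 := by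
      have h2 : ∑ j ∈ univ.erase i, y j + y i = ∑ j, y j := Finset.sum_erase_add _ _ (mem_univ i)
      have : ∑ j ∈ univ.erase i, y j ≤ 0 := by linarith
      have h3 : 0 ≤ ∑ j ∈ univ.erase i, y j := Finset.sum_nonneg (fun j _ => hnn j)
      linarith
    have hz : ∀ j ∈ univ.erase i, y j = 0 :=
      (Finset.sum_eq_zero_iff_of_nonneg (fun j _ => hnn j)).1 hrest
    have hyi : y i = 1 := by
      have h2 : ∑ j ∈ univ.erase i, y j + y i = ∑ j, y j := Finset.sum_erase_add _ _ (mem_univ i)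
      rw [hrest] at h2; linarith
    right; exact ⟨i, funext fun j => by
      rw [sg_apply]
      split
      · next h => rw [h, hyi]
      · next h => exact hz j (Finset.mem_erase.2 ⟨h, mem_univ j⟩)⟩

end S17

namespace S17
variable {d : ℕ}

/-- Bundle of all standing hypotheses. -/
structure Setup (d : ℕ) where
  E : Finset (Edge d)
  κ : Edge d → ℝ
  A : Matrix (Fin d) (Fin d) ℝ
  b : Vec d
  hsimple : ∀ e ∈ E, e.1 ≠ e.2
  hκ : ∀ e ∈ E, 0 < κ e
  hnat : ∀ y, InV E y → ∀ i, ∃ n : ℕ, y i = (n : ℝ)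
  hfo : ∀ y, IsSource E y → ∑ i, y i ≤ 1
  hnored : ∀ i : Fin d, ∃ e ∈ E, e.2 i ≠ e.1 i
  hendo : Endotactic E
  hA : ∀ i j, A i j =
    ∑ e ∈ E.filter (fun e => e.1 = (Pi.single i 1 : Vec d)), κ e * (e.2 j - e.1 j)
  hb : ∀ i, b i = ∑ e ∈ E.filter (fun e => e.1 = (0 : Vec d)), κ e * e.2 i

variable (S : Setup d)

def De (i j : Fin d) : Prop := i ≠ j ∧ (sg i, sg j) ∈ S.E
def Lk (i : Fin d) : Prop := (sg i, (0 : Vec d)) ∈ S.E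
def Fd (j : Fin d) : Prop := ∃ e ∈ S.E, e.1 = 0 ∧ e.2 j ≠ 0
def Rch : Fin d → Fin d → Prop := Relation.ReflTransGen (De S)
def IZ (i : Fin d) : Prop := ∃ l, Lk S l ∧ Rch S i l
noncomputable def cls (j : Fin d) : Finset (Fin d) := univ.filter (fun i => Rch S j i)

lemma mem_cls {i j : Fin d} : i ∈ cls S j ↔ Rch S j i := by simp [cls]

lemma rch_refl (i : Fin d) : Rch S i i := Relation.ReflTransGen.refl
lemma rch_trans {i j k : Fin d} (h1 : Rch S i j) (h2 : Rch S j k) : Rch S i k := h1.trans h2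
lemma rch_of_de {i j : Fin d} (h : De S i j) : Rch S i j := Relation.ReflTransGen.single h

lemma mem_self_cls (j : Fin d) : j ∈ cls S j := (mem_cls S).2 (rch_refl S j)

/-- membership of pairs -/
lemma mem_E_pair {e : Edge d} (he : e ∈ S.E) : (e.1, e.2) ∈ S.E := by simpa using he

lemma src_nonneg {e : Edge d} (he : e ∈ S.E) (i : Fin d) : 0 ≤ e.1 i := by
  obtain ⟨n, hn⟩ := S.hnat e.1 ⟨e, he, Or.inl rfl⟩ i
  rw [hn]; positivity

lemma tgt_nonneg {e : Edge d} (he : e ∈ S.E) (i : Fin d) : 0 ≤ e.2 i := by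
  obtain ⟨n, hn⟩ := S.hnat e.2 ⟨e, he, Or.inr rfl⟩ i
  rw [hn]; positivity

/-- extraction from endotacticity -/
lemma endo_ex (u : Vec d) {e : Edge d} (he : e ∈ S.E) (hpos : 0 < (e.2 - e.1) ⬝ᵥ u) :
    ∃ z ∈ srcU S.E u, e.1 ⬝ᵥ u < z ⬝ᵥ u := by
  have h := S.hendo u
  unfold uEndotactic at h
  push_neg at h
  exact h e.1 e.2 (mem_E_pair S he) hpos

lemma source_shape {e : Edge d} (he : e ∈ S.E) : e.1 = 0 ∨ ∃ i, e.1 = sg i :=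
  nat_small (S.hnat e.1 ⟨e, he, Or.inl rfl⟩) (S.hfo e.1 ⟨e.2, mem_E_pair S he⟩)

lemma srcU_shape {z : Vec d} (u : Vec d) (hz : z ∈ srcU S.E u) : z = 0 ∨ ∃ i, z = sg i := by
  obtain ⟨y', hy', -⟩ := hz
  exact source_shape S (e := (z, y')) hy'

lemma srcU_sum_le {z : Vec d} (u : Vec d) (hz : z ∈ srcU S.E u) : ∑ i, z i ≤ 1 := by
  obtain ⟨y', hy', -⟩ := hz
  exact S.hfo z ⟨y', hy'⟩

/-- targets of monomolecular sources -/
lemma target_shape {e : Edge d} (he : e ∈ S.E) {i : Fin d} (hi : e.1 = sg i) :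
    e.2 = 0 ∨ ∃ m, m ≠ i ∧ e.2 = sg m := by
  have hsum : ∑ j, e.2 j ≤ 1 := by
    by_contra hgt
    push_neg at hgt
    have hpos : 0 < (e.2 - e.1) ⬝ᵥ (fun _ => (1:ℝ)) := by
      have h1 : (e.2 - e.1) ⬝ᵥ (fun _ => (1:ℝ)) = (∑ j, e.2 j) - ∑ j, e.1 j := by
        simp [dotProduct, Finset.sum_sub_distrib]
      have h2 : ∑ j, e.1 j = 1 := by rw [hi]; simp [sg]
      rw [h1, h2]; linarith
    obtain ⟨z, hz, hlt⟩ := endo_ex S _ he hpos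
    have h3 : e.1 ⬝ᵥ (fun _ => (1:ℝ)) = 1 := by rw [hi]; simp [sg, dotProduct]
    have h4 : z ⬝ᵥ (fun _ => (1:ℝ)) = ∑ j, z j := by simp [dotProduct]
    have := srcU_sum_le S _ hz
    rw [h3, h4] at hlt; linarith
  rcases nat_small (S.hnat e.2 ⟨e, he, Or.inr rfl⟩) hsum with h | ⟨m, hm⟩
  · exact Or.inl h
  · refine Or.inr ⟨m, fun hmi => ?_, hm⟩
    exact S.hsimple e he (by rw [hi, hm, hmi])

/-- every coordinate's unit vector is a source -/
lemma unit_is_source (i : Fin d) : ∃ e ∈ S.E, e.1 = sg i := by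
  obtain ⟨e, he, hne⟩ := S.hnored i
  have key : e.1 i = 0 → ∃ e' ∈ S.E, e'.1 = sg i := by
    intro h1i
    have h2i : 0 < e.2 i := lt_of_le_of_ne (tgt_nonneg S he i) (fun h => hne (by rw [← h, h1i]))
    have hpos : 0 < (e.2 - e.1) ⬝ᵥ sg i := by
      rw [dot_sg]; simpa [h1i] using h2i
    obtain ⟨z, hz, hlt⟩ := endo_ex S _ he hpos
    rw [dot_sg, dot_sg, h1i] at hlt
    rcases srcU_shape S _ hz with rfl | ⟨t, rfl⟩
    · simp at hlt
    · rw [sg_apply] at hlt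
      split at hlt
      · next h => obtain ⟨y', hy', -⟩ := hz; exact ⟨(sg t, y'), hy', by rw [h]⟩
      · norm_num at hlt
  rcases source_shape S he with h0 | ⟨k, hk⟩
  · exact key (by rw [h0]; rfl)
  · by_cases hki : k = i
    · exact ⟨e, he, by rw [hk, hki]⟩
    · exact key (by rw [hk, sg_apply, if_neg (fun h => hki h.symm)])

end S17
namespace S17
variable {d : ℕ} (S : Setup d)

lemma A_entry (i j : Fin d) :
    S.A i j = ∑ e ∈ S.E.filter (fun e => e.1 = sg i), S.κ e * (e.2 j - e.1 j) := S.hA i j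

lemma filt_mem {i : Fin d} {e : Edge d} (he : e ∈ S.E.filter (fun e => e.1 = sg i)) :
    e ∈ S.E ∧ e.1 = sg i := by simpa using he

lemma tgt_j_nonneg {i j : Fin d} (hij : i ≠ j) {e : Edge d}
    (he : e ∈ S.E.filter (fun e => e.1 = sg i)) : 0 ≤ S.κ e * (e.2 j - e.1 j) := by
  obtain ⟨heE, h1⟩ := filt_mem S he
  have : e.1 j = 0 := by rw [h1, sg_apply, if_neg (fun h => hij h.symm)]
  rw [this]
  have := tgt_nonneg S heE j
  have := (S.hκ e heE).le
  nlinarith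

lemma A_nonneg {i j : Fin d} (hij : i ≠ j) : 0 ≤ S.A i j := by
  rw [A_entry]
  exact Finset.sum_nonneg (fun e he => tgt_j_nonneg S hij he)

lemma A_pos_of_de {i j : Fin d} (h : De S i j) : 0 < S.A i j := by
  rw [A_entry]
  refine Finset.sum_pos' (fun e he => tgt_j_nonneg S h.1 he) ⟨(sg i, sg j), ?_, ?_⟩
  · simp [Finset.mem_filter, h.2]
  · have h2 : (sg j : Vec d) j = 1 := by rw [sg_apply, if_pos rfl]
    have h1 : (sg i : Vec d) j = 0 := by rw [sg_apply, if_neg (fun hh => h.1 hh.symm)]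
    simp only [h2, h1]
    have := S.hκ _ h.2
    linarith

lemma A_eq_zero {i j : Fin d} (hij : i ≠ j) (h : ¬ De S i j) : S.A i j = 0 := by
  rw [A_entry]
  refine Finset.sum_eq_zero (fun e he => ?_)
  obtain ⟨heE, h1⟩ := filt_mem S he
  have h1j : e.1 j = 0 := by rw [h1, sg_apply, if_neg (fun hh => hij hh.symm)]
  have h2j : e.2 j = 0 := by
    rcases target_shape S heE h1 with h0 | ⟨m, hmi, hm⟩
    · rw [h0]; rfl
    · rw [hm, sg_apply, if_neg ?_]
      intro hjm
      exact h ⟨hij, by rw [hjm, ← hm, ← h1]; exact mem_E_pair S heE⟩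
  rw [h1j, h2j]; ring

lemma A_diag_nonpos (j : Fin d) : S.A j j ≤ 0 := by
  rw [A_entry]
  refine Finset.sum_nonpos (fun e he => ?_)
  obtain ⟨heE, h1⟩ := filt_mem S he
  have h1j : e.1 j = 1 := by rw [h1, sg_apply, if_pos rfl]
  have h2j : e.2 j = 0 := by
    rcases target_shape S heE h1 with h0 | ⟨m, hmj, hm⟩
    · rw [h0]; rfl
    · rw [hm, sg_apply, if_neg (fun h => hmj h.symm)]
  rw [h1j, h2j]
  have := S.hκ e heE
  nlinarith

lemma rowsum_term (i : Fin d) {e : Edge d} (he : e ∈ S.E.filter (fun e => e.1 = sg i)) :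
    ∑ j, S.κ e * (e.2 j - e.1 j) = if e.2 = 0 then -S.κ e else 0 := by
  obtain ⟨heE, h1⟩ := filt_mem S he
  have hs1 : ∑ j, e.1 j = 1 := by rw [h1]; simp [sg]
  rcases target_shape S heE h1 with h0 | ⟨m, hmi, hm⟩
  · rw [if_pos h0, ← Finset.mul_sum, Finset.sum_sub_distrib, hs1, h0]
    simp
  · rw [if_neg (by rw [hm]; exact sg_ne_zero m), ← Finset.mul_sum, Finset.sum_sub_distrib, hs1, hm]
    simp [sg]

lemma rowsum_nonpos (i : Fin d) : ∑ j, S.A i j ≤ 0 := by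
  have h : ∑ j, S.A i j = ∑ e ∈ S.E.filter (fun e => e.1 = sg i), ∑ j, S.κ e * (e.2 j - e.1 j) := by
    simp_rw [A_entry]; rw [Finset.sum_comm]
  rw [h]
  refine Finset.sum_nonpos (fun e he => ?_)
  rw [rowsum_term S i he]
  split
  · have := S.hκ e (filt_mem S he).1; linarith
  · exact le_refl 0

lemma rowsum_eq_zero {i : Fin d} (h : ¬ Lk S i) : ∑ j, S.A i j = 0 := by
  have heq : ∑ j, S.A i j = ∑ e ∈ S.E.filter (fun e => e.1 = sg i), ∑ j, S.κ e * (e.2 j - e.1 j) := by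
    simp_rw [A_entry]; rw [Finset.sum_comm]
  rw [heq]
  refine Finset.sum_eq_zero (fun e he => ?_)
  rw [rowsum_term S i he]
  rw [if_neg ?_]
  intro h0
  obtain ⟨heE, h1⟩ := filt_mem S he
  refine h ?_
  have he2 : e = (sg i, (0 : Vec d)) := by
    cases e with | mk a c => simp only at h1 h0; rw [h1, h0]
  show (sg i, (0 : Vec d)) ∈ S.E
  rw [← he2]; exact heE

lemma rowsum_neg {i : Fin d} (h : Lk S i) : ∑ j, S.A i j < 0 := by
  have heq : ∑ j, S.A i j = ∑ e ∈ S.E.filter (fun e => e.1 = sg i), ∑ j, S.κ e * (e.2 j - e.1 j) := by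
    simp_rw [A_entry]; rw [Finset.sum_comm]
  rw [heq]
  have hmem : ((sg i, (0:Vec d)) : Edge d) ∈ S.E.filter (fun e => e.1 = sg i) := by
    simp [Finset.mem_filter]; exact h
  have : ∀ e ∈ S.E.filter (fun e => e.1 = sg i), ∑ j, S.κ e * (e.2 j - e.1 j) ≤ 0 := by
    intro e he
    rw [rowsum_term S i he]
    split
    · have := S.hκ e (filt_mem S he).1; linarith
    · exact le_refl 0
  have hneg : ∑ j, S.κ ((sg i, (0:Vec d)) : Edge d) * (((0:Vec d)) j - (sg i) j) < 0 := by
    have hr := rowsum_term S i hmem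
    simp only at hr
    rw [hr]; simp only [if_true]
    have := S.hκ _ h
    linarith
  have hsplit := Finset.add_sum_erase _ (fun e => ∑ j, S.κ e * (e.2 j - e.1 j)) hmem
  have hrest : ∑ e ∈ (S.E.filter (fun e => e.1 = sg i)).erase ((sg i, (0:Vec d)) : Edge d),
      ∑ j, S.κ e * (e.2 j - e.1 j) ≤ 0 :=
    Finset.sum_nonpos (fun e he => this e (Finset.mem_of_mem_erase he))
  linarith

lemma b_nonneg (j : Fin d) : 0 ≤ S.b j := by
  rw [S.hb]
  refine Finset.sum_nonneg (fun e he => ?_)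
  obtain ⟨heE, -⟩ : e ∈ S.E ∧ e.1 = 0 := by simpa using he
  exact mul_nonneg (S.hκ e heE).le (tgt_nonneg S heE j)

lemma b_pos {j : Fin d} (h : Fd S j) : 0 < S.b j := by
  obtain ⟨e, he, h1, h2⟩ := h
  rw [S.hb]
  refine Finset.sum_pos' (fun e' he' => ?_) ⟨e, by simpa using ⟨he, h1⟩, ?_⟩
  · obtain ⟨heE, -⟩ : e' ∈ S.E ∧ e'.1 = 0 := by simpa using he'
    exact mul_nonneg (S.hκ e' heE).le (tgt_nonneg S heE j)
  · exact mul_pos (S.hκ e he) (lt_of_le_of_ne (tgt_nonneg S he j) (Ne.symm h2))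

lemma b_zero {j : Fin d} (h : ¬ Fd S j) : S.b j = 0 := by
  rw [S.hb]
  refine Finset.sum_eq_zero (fun e he => ?_)
  obtain ⟨heE, h1⟩ : e ∈ S.E ∧ e.1 = 0 := by simpa using he
  have : e.2 j = 0 := by
    by_contra h2
    exact h ⟨e, heE, h1, h2⟩
  rw [this]; ring

end S17
namespace S17
variable {d : ℕ} (S : Setup d)

/-- indicator vector -/
noncomputable def ind (W : Set (Fin d)) : Vec d := fun i => if i ∈ W then 1 else 0

lemma sg_dot_ind (t : Fin d) (W : Set (Fin d)) :
    sg t ⬝ᵥ ind W = if t ∈ W then 1 else 0 := by rw [sg_dot]; rfl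

lemma ML1 (W : Set (Fin d)) (hcl : ∀ i ∈ W, ∀ j, De S i j → j ∈ W)
    (hlk : ∀ i ∈ W, ¬ Lk S i) :
    (∀ i j, De S i j → j ∈ W → i ∈ W) ∧
    (∀ e ∈ S.E, e.1 = 0 → ∀ w ∈ W, e.2 w = 0) := by
  set u : Vec d := ind W with hu
  have hsrc : ∀ z ∈ srcU S.E u, z ⬝ᵥ u ≤ 0 := by
    intro z hz
    rcases srcU_shape S _ hz with rfl | ⟨t, rfl⟩
    · simp
    · rw [sg_dot_ind]
      split
      · next htW =>
        exfalso
        obtain ⟨y', hy', hne⟩ := hz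
        rcases target_shape S (e := (sg t, y')) hy' rfl with h0 | ⟨m, hmt, hm⟩
        · replace h0 : y' = 0 := h0
          exact hlk t htW (by rw [h0] at hy'; exact hy')
        · replace hm : y' = sg m := hm
          have hmW : m ∉ W := by
            intro hmW
            apply hne
            rw [hm, sub_dotProduct, sg_dot_ind, sg_dot_ind, if_pos hmW, if_pos htW]
            ring
          exact hmW (hcl t htW m ⟨fun h => hmt h.symm, by rw [← hm]; exact hy'⟩)
      · exact le_refl _
  constructor
  · intro i j hij hjW
    by_contra hiW
    have hpos : 0 < ((sg j : Vec d) - sg i) ⬝ᵥ u := by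
      rw [sub_dotProduct, sg_dot_ind, sg_dot_ind, if_pos hjW, if_neg hiW]; norm_num
    obtain ⟨z, hz, hlt⟩ := endo_ex S u (e := (sg i, sg j)) hij.2 hpos
    have h0 : (sg i : Vec d) ⬝ᵥ u = 0 := by rw [sg_dot_ind, if_neg hiW]
    rw [h0] at hlt
    exact absurd (hsrc z hz) (not_le.2 hlt)
  · intro e he h1 w hwW
    by_contra hne
    have h2w : 0 < e.2 w := lt_of_le_of_ne (tgt_nonneg S he w) (Ne.symm hne)
    have hpos : 0 < (e.2 - e.1) ⬝ᵥ u := by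
      rw [sub_dotProduct, h1, zero_dotProduct, sub_zero]
      have : e.2 ⬝ᵥ u = ∑ i, e.2 i * u i := rfl
      rw [this]
      refine Finset.sum_pos' (fun i _ => ?_) ⟨w, mem_univ w, ?_⟩
      · refine mul_nonneg (tgt_nonneg S he i) ?_
        rw [hu]; unfold ind; split <;> norm_num
      · rw [hu]; unfold ind; rw [if_pos hwW]; linarith
    obtain ⟨z, hz, hlt⟩ := endo_ex S u he hpos
    rw [h1, zero_dotProduct] at hlt
    exact absurd (hsrc z hz) (not_le.2 hlt)

lemma ML2 (W : Set (Fin d)) (hin : ∀ i j, De S i j → j ∈ W → i ∈ W)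
    (hfd : ∀ e ∈ S.E, e.1 = 0 → ∀ w ∈ W, e.2 w = 0) :
    (∀ i ∈ W, ¬ Lk S i) ∧ (∀ i ∈ W, ∀ j, De S i j → j ∈ W) := by
  set u : Vec d := -ind W with hu
  have hiu : ∀ t, sg t ⬝ᵥ u = if t ∈ W then (-1:ℝ) else 0 := by
    intro t
    rw [hu, dotProduct_neg, sg_dot_ind]
    split <;> norm_num
  have hfeed0 : ∀ y' : Vec d, ((0 : Vec d), y') ∈ S.E → y' ⬝ᵥ u = 0 := by
    intro y' hy'
    rw [hu, dotProduct_neg, neg_eq_zero]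
    have : y' ⬝ᵥ ind W = ∑ i, y' i * ind W i := rfl
    rw [this]
    refine Finset.sum_eq_zero (fun i _ => ?_)
    unfold ind
    split
    · next hiW =>
        have h00 : y' i = 0 := hfd _ hy' rfl i hiW
        rw [h00]; ring
    · ring
  have hsrc : ∀ z ∈ srcU S.E u, z ⬝ᵥ u ≤ -1 := by
    intro z hz
    rcases srcU_shape S _ hz with rfl | ⟨t, rfl⟩
    · exfalso
      obtain ⟨y', hy', hne⟩ := hz
      apply hne
      rw [sub_zero, hfeed0 y' hy']
    · rw [hiu]
      split
      · exact le_refl _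
      · next htW =>
        exfalso
        obtain ⟨y', hy', hne⟩ := hz
        rcases target_shape S (e := (sg t, y')) hy' rfl with h0 | ⟨m, hmt, hm⟩
        · replace h0 : y' = 0 := h0
          apply hne
          rw [h0, sub_dotProduct, zero_dotProduct, hiu, if_neg htW]; ring
        · replace hm : y' = sg m := hm
          have hmW : m ∈ W := by
            by_contra hmW
            apply hne
            rw [hm, sub_dotProduct, hiu, hiu, if_neg hmW, if_neg htW]; ring
          exact htW (hin t m ⟨fun h => hmt h.symm, by rw [← hm]; exact hy'⟩ hmW)
  constructor
  · intro i hiW hLk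
    have hpos : 0 < ((0 : Vec d) - sg i) ⬝ᵥ u := by
      rw [sub_dotProduct, zero_dotProduct, hiu, if_pos hiW]; norm_num
    obtain ⟨z, hz, hlt⟩ := endo_ex S u (e := (sg i, (0:Vec d))) hLk hpos
    have h0 : (sg i : Vec d) ⬝ᵥ u = -1 := by rw [hiu, if_pos hiW]
    rw [h0] at hlt
    exact absurd (hsrc z hz) (not_le.2 hlt)
  · intro i hiW j hij
    by_contra hjW
    have hpos : 0 < ((sg j : Vec d) - sg i) ⬝ᵥ u := by
      rw [sub_dotProduct, hiu, hiu, if_neg hjW, if_pos hiW]; norm_num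
    obtain ⟨z, hz, hlt⟩ := endo_ex S u (e := (sg i, sg j)) hij.2 hpos
    have h0 : (sg i : Vec d) ⬝ᵥ u = -1 := by rw [hiu, if_pos hiW]
    rw [h0] at hlt
    exact absurd (hsrc z hz) (not_le.2 hlt)

lemma rch_mem {W : Set (Fin d)} (hcl : ∀ k ∈ W, ∀ m, De S k m → m ∈ W)
    {a c : Fin d} (h : Rch S a c) (ha : a ∈ W) : c ∈ W := by
  induction h with
  | refl => exact ha
  | tail p e ih => exact hcl _ ih _ e

lemma no_reach_leak {W : Set (Fin d)} (hlk : ∀ k ∈ W, ¬ Lk S k)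
    (hcl : ∀ k ∈ W, ∀ m, De S k m → m ∈ W) {k : Fin d} (hk : k ∈ W) (hIZ : IZ S k) : False := by
  obtain ⟨l, hl, hr⟩ := hIZ
  exact hlk l (rch_mem S hcl hr hk) hl

lemma IZ_of_rch {i j : Fin d} (h : Rch S i j) (hj : IZ S j) : IZ S i := by
  obtain ⟨l, hl, hr⟩ := hj
  exact ⟨l, hl, h.trans hr⟩

lemma IZ_of_lk {i : Fin d} (h : Lk S i) : IZ S i := ⟨i, h, rch_refl S i⟩

lemma nIZ_closed {i j : Fin d} (hi : ¬ IZ S i) (hij : De S i j) : ¬ IZ S j :=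
  fun h => hi (IZ_of_rch S (rch_of_de S hij) h)

/-- ML1 applied to the complement of IZ -/
lemma ml1N : (∀ i j, De S i j → ¬ IZ S j → ¬ IZ S i) ∧
    (∀ e ∈ S.E, e.1 = 0 → ∀ w, ¬ IZ S w → e.2 w = 0) := by
  have h := ML1 S {i | ¬ IZ S i} (fun i hi j hij => nIZ_closed S hi hij)
    (fun i hi hl => hi (IZ_of_lk S hl))
  exact ⟨fun i j hij hj => h.1 i j hij hj, fun e he h1 w hw => h.2 e he h1 w hw⟩

lemma rch_back {i j : Fin d} (hj : ¬ IZ S j) (hij : De S i j) : Rch S j i := by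
  have h := ML1 S {k | Rch S j k}
    (fun k hk m hkm => Relation.ReflTransGen.tail hk hkm)
    (fun k hk hl => hj (IZ_of_rch S hk (IZ_of_lk S hl)))
  exact h.1 i j hij (rch_refl S j)

lemma rch_symm {i j : Fin d} (hi : ¬ IZ S i) (h : Rch S i j) : Rch S j i := by
  revert hi
  induction h using Relation.ReflTransGen.head_induction_on with
  | refl => exact fun _ => rch_refl S _
  | head hac hcb ih =>
    intro ha
    have hc : ¬ IZ S _ := fun hh => ha (IZ_of_rch S (rch_of_de S hac) hh)
    exact (ih hc).trans (rch_back S hc hac)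

lemma cls_not_IZ {j i : Fin d} (hj : ¬ IZ S j) (hi : i ∈ cls S j) : ¬ IZ S i :=
  fun h => hj (IZ_of_rch S ((mem_cls S).1 hi) h)

lemma cls_eq {j i : Fin d} (hj : ¬ IZ S j) (hi : i ∈ cls S j) : cls S i = cls S j := by
  have hji : Rch S j i := (mem_cls S).1 hi
  have hij : Rch S i j := rch_symm S hj hji
  ext k
  simp only [mem_cls]
  exact ⟨fun h => hji.trans h, fun h => hij.trans h⟩

end S17
namespace S17
variable {d : ℕ} (S : Setup d)

lemma vm (x : Vec d) (j : Fin d) : (x ᵥ* S.A) j = ∑ i, x i * S.A i j := by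
  simp [Matrix.vecMul, dotProduct]

lemma mv (y : Vec d) (i : Fin d) : (S.A *ᵥ y) i = ∑ j, S.A i j * y j := by
  simp [Matrix.mulVec, dotProduct]

lemma vm_split (x : Vec d) (j : Fin d) :
    (x ᵥ* S.A) j = x j * S.A j j + ∑ i ∈ univ.erase j, x i * S.A i j := by
  rw [vm, ← Finset.add_sum_erase _ _ (mem_univ j)]

lemma mv_split (y : Vec d) (i : Fin d) :
    (S.A *ᵥ y) i = S.A i i * y i + ∑ j ∈ univ.erase i, S.A i j * y j := by
  rw [mv, ← Finset.add_sum_erase _ _ (mem_univ i)]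

/-- backward zero propagation -/
lemma zero_prop {x : Vec d} (hx : ∀ i, 0 ≤ x i) {j : Fin d} {c : ℝ} (hc : 0 ≤ c)
    (heq : (x ᵥ* S.A) j + c = 0) (hj : x j = 0) : c = 0 ∧ ∀ i, De S i j → x i = 0 := by
  rw [vm_split, hj] at heq
  have hT : 0 ≤ ∑ i ∈ univ.erase j, x i * S.A i j :=
    Finset.sum_nonneg (fun i hi => mul_nonneg (hx i) (A_nonneg S (Finset.mem_erase.1 hi).1))
  have hT0 : ∑ i ∈ univ.erase j, x i * S.A i j = 0 := by linarith
  have hall := (Finset.sum_eq_zero_iff_of_nonneg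
    (fun i hi => mul_nonneg (hx i) (A_nonneg S (Finset.mem_erase.1 hi).1))).1 hT0
  refine ⟨by linarith, fun i hij => ?_⟩
  have hmem : i ∈ univ.erase j := Finset.mem_erase.2 ⟨hij.1, mem_univ i⟩
  have := hall i hmem
  have hApos := A_pos_of_de S hij
  rcases mul_eq_zero.1 this with h | h
  · exact h
  · exact absurd h (ne_of_gt hApos)

lemma zero_prop_path {x : Vec d} (hstep : ∀ j, x j = 0 → ∀ i, De S i j → x i = 0)
    {a c : Fin d} (h : Rch S a c) (hc : x c = 0) : x a = 0 := by
  induction h using Relation.ReflTransGen.head_induction_on with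
  | refl => exact hc
  | head hab hbc ih => exact hstep _ ih _ hab

lemma A_zero_IZ_N {i j : Fin d} (hi : IZ S i) (hj : ¬ IZ S j) : S.A i j = 0 := by
  refine A_eq_zero S (fun h => hj (h ▸ hi)) (fun h => ((ml1N S).1 i j h hj) hi)

lemma A_zero_N_IZ {i j : Fin d} (hi : ¬ IZ S i) (hj : IZ S j) : S.A i j = 0 := by
  refine A_eq_zero S (fun h => hi (h ▸ hj)) (fun h => hi (IZ_of_rch S (rch_of_de S h) hj))

lemma vm_restrict {x : Vec d} {P : Fin d → Prop} (hsupp : ∀ i, ¬ P i → x i = 0) (j : Fin d) :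
    (x ᵥ* S.A) j = ∑ i ∈ univ.filter P, x i * S.A i j := by
  rw [vm, ← Finset.sum_filter_add_sum_filter_not univ P]
  have h2 : ∑ i ∈ univ.filter (fun i => ¬ P i), x i * S.A i j = 0 :=
    Finset.sum_eq_zero (fun i hi => by rw [hsupp i (Finset.mem_filter.1 hi).2]; ring)
  rw [h2, add_zero]

lemma mv_restrict {y : Vec d} {P : Fin d → Prop} (hsupp : ∀ j, ¬ P j → y j = 0) (i : Fin d) :
    (S.A *ᵥ y) i = ∑ j ∈ univ.filter P, S.A i j * y j := by
  rw [mv, ← Finset.sum_filter_add_sum_filter_not univ P]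
  have h2 : ∑ j ∈ univ.filter (fun j => ¬ P j), S.A i j * y j = 0 :=
    Finset.sum_eq_zero (fun j hj => by rw [hsupp j (Finset.mem_filter.1 hj).2]; ring)
  rw [h2, add_zero]

/-- uniqueness on the IZ block: kernel of left multiplication is trivial -/
lemma IZ_uniq {w : Vec d} (hsupp : ∀ i, ¬ IZ S i → w i = 0)
    (heq : ∀ j, IZ S j → (w ᵥ* S.A) j = 0) : w = 0 := by
  set ω : Vec d := fun i => |w i| with hω
  have hωnn : ∀ i, 0 ≤ ω i := fun i => abs_nonneg _
  have hωsupp : ∀ i, ¬ IZ S i → ω i = 0 := fun i hi => by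
    rw [hω]; simp only; rw [hsupp i hi, abs_zero]
  have step1 : ∀ j, 0 ≤ (ω ᵥ* S.A) j := by
    intro j
    by_cases hj : IZ S j
    · have h0 := heq j hj
      rw [vm_split] at h0 ⊢
      have habs : |w j * S.A j j| ≤ ∑ i ∈ univ.erase j, ω i * S.A i j := by
        have h1 : w j * S.A j j = -∑ i ∈ univ.erase j, w i * S.A i j := by linarith
        rw [h1, abs_neg]
        refine (Finset.abs_sum_le_sum_abs _ _).trans (le_of_eq ?_)
        refine Finset.sum_congr rfl (fun i hi => ?_)
        rw [abs_mul, abs_of_nonneg (A_nonneg S (Finset.mem_erase.1 hi).1)]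
      have hdiag : ω j * S.A j j = -|w j * S.A j j| := by
        rw [abs_mul, abs_of_nonpos (A_diag_nonpos S j)]
        rw [hω]; simp only; ring
      rw [hdiag] at *
      linarith [habs]
    · rw [vm_restrict S hωsupp j]
      refine le_of_eq (Finset.sum_eq_zero (fun i hi => ?_)).symm
      rw [A_zero_IZ_N S (Finset.mem_filter.1 hi).2 hj]; ring
  have hsum : ∑ j, (ω ᵥ* S.A) j = ∑ i, ω i * ∑ j, S.A i j := by
    simp_rw [vm, Finset.mul_sum]
    rw [Finset.sum_comm]
  have hsum_le : ∑ j, (ω ᵥ* S.A) j ≤ 0 := by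
    rw [hsum]
    exact Finset.sum_nonpos (fun i _ => mul_nonpos_of_nonneg_of_nonpos (hωnn i) (rowsum_nonpos S i))
  have hall0 : ∀ j, (ω ᵥ* S.A) j = 0 := by
    have h0 : ∑ j, (ω ᵥ* S.A) j = 0 :=
      le_antisymm hsum_le (Finset.sum_nonneg (fun j _ => step1 j))
    exact fun j => (Finset.sum_eq_zero_iff_of_nonneg (fun j _ => step1 j)).1 h0 j (mem_univ j)
  have hterm0 : ∀ i, ω i * ∑ j, S.A i j = 0 := by
    have h0 : ∑ i, ω i * ∑ j, S.A i j = 0 := by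
      rw [← hsum]; exact Finset.sum_eq_zero (fun j _ => hall0 j)
    intro i
    exact (Finset.sum_eq_zero_iff_of_nonpos (fun i _ =>
      mul_nonpos_of_nonneg_of_nonpos (hωnn i) (rowsum_nonpos S i))).1 h0 i (mem_univ i)
  have hleak0 : ∀ i, Lk S i → ω i = 0 := by
    intro i hl
    have := hterm0 i
    rcases mul_eq_zero.1 this with h | h
    · exact h
    · exact absurd h (ne_of_lt (rowsum_neg S hl))
  have hstep : ∀ j, ω j = 0 → ∀ i, De S i j → ω i = 0 := by
    intro j hj i hij
    exact (zero_prop S hωnn (le_refl 0) (by rw [add_zero]; exact hall0 j) hj).2 i hij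
  have hωz : ∀ i, ω i = 0 := by
    intro i
    by_cases hi : IZ S i
    · obtain ⟨l, hl, hr⟩ := hi
      exact zero_prop_path S hstep hr (hleak0 l hl)
    · exact hωsupp i hi
  funext i
  have := hωz i
  rw [hω] at this; simp only at this
  simpa using abs_eq_zero.1 this

/-- on the IZ block, a supersolution of the column system is nonnegative -/
lemma col_nonneg {y : Vec d} (hsupp : ∀ i, ¬ IZ S i → y i = 0)
    (hle : ∀ i, IZ S i → (S.A *ᵥ y) i ≤ 0) : ∀ i, 0 ≤ y i := by
  by_contra hcon
  push_neg at hcon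
  obtain ⟨i₀, hi₀⟩ := hcon
  obtain ⟨j, -, hj⟩ := Finset.exists_min_image univ y ⟨i₀, mem_univ i₀⟩
  have hyj : y j < 0 := lt_of_le_of_lt (hj i₀ (mem_univ i₀)) hi₀
  have hjIZ : IZ S j := by
    by_contra h
    rw [hsupp j h] at hyj; exact absurd hyj (lt_irrefl 0)
  set W : Set (Fin d) := {k | y k = y j} with hW
  have key : ∀ k ∈ W, ¬ Lk S k ∧ ∀ m, De S k m → m ∈ W := by
    intro k hk
    have hyk : y k = y j := hk
    have hkIZ : IZ S k := by
      by_contra h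
      rw [hsupp k h] at hyk
      exact absurd hyj (by rw [← hyk]; exact lt_irrefl 0)
    have h0 := hle k hkIZ
    rw [mv_split] at h0
    have h1 : ∀ t ∈ univ.erase k, S.A k t * y j ≤ S.A k t * y t := fun t ht =>
      mul_le_mul_of_nonneg_left (hj t (mem_univ t)) (A_nonneg S (Ne.symm (Finset.mem_erase.1 ht).1))
    have h2 : (∑ t ∈ univ.erase k, S.A k t) * y j ≤ ∑ t ∈ univ.erase k, S.A k t * y t := by
      rw [Finset.sum_mul]
      exact Finset.sum_le_sum h1
    have hrs : S.A k k + ∑ t ∈ univ.erase k, S.A k t = ∑ t, S.A k t :=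
      Finset.add_sum_erase _ _ (mem_univ k)
    have h3 : y j * (∑ t, S.A k t) ≤ 0 := by
      rw [← hrs]
      have : y j * (S.A k k + ∑ t ∈ univ.erase k, S.A k t)
          = S.A k k * y k + (∑ t ∈ univ.erase k, S.A k t) * y j := by
        rw [hyk]; ring
      rw [this]
      linarith
    have h4 : 0 ≤ y j * (∑ t, S.A k t) := by
      nlinarith [hyj.le, rowsum_nonpos S k]
    have h5 : (∑ t, S.A k t) = 0 := by
      rcases mul_eq_zero.1 (le_antisymm h3 h4) with h | h
      · exact absurd h (ne_of_lt hyj)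
      · exact h
    have hnlk : ¬ Lk S k := fun hl => absurd h5 (ne_of_lt (rowsum_neg S hl))
    -- equality case
    have h6 : ∑ t ∈ univ.erase k, S.A k t * y t = (∑ t ∈ univ.erase k, S.A k t) * y j := by
      have hAkk : S.A k k = -∑ t ∈ univ.erase k, S.A k t := by linarith [hrs, h5]
      refine le_antisymm ?_ h2
      have : S.A k k * y k = -((∑ t ∈ univ.erase k, S.A k t) * y j) := by
        rw [hAkk, hyk]; ring
      linarith
    have h7 : ∀ t ∈ univ.erase k, S.A k t * y t - S.A k t * y j = 0 := by
      have hsum0 : ∑ t ∈ univ.erase k, (S.A k t * y t - S.A k t * y j) = 0 := by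
        rw [Finset.sum_sub_distrib, h6, ← Finset.sum_mul]; ring
      exact (Finset.sum_eq_zero_iff_of_nonneg (fun t ht => by
        have := h1 t ht; linarith)).1 hsum0
    refine ⟨hnlk, fun m hkm => ?_⟩
    have hmem : m ∈ univ.erase k := Finset.mem_erase.2 ⟨fun h => hkm.1 h.symm, mem_univ m⟩
    have := h7 m hmem
    have hApos := A_pos_of_de S hkm
    have : y m = y j := by
      by_contra hne
      have : S.A k m * (y m - y j) ≠ 0 := mul_ne_zero (ne_of_gt hApos) (sub_ne_zero.2 hne)
      exact this (by linarith [h7 m hmem])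
    exact this
  exact no_reach_leak S (fun k hk => (key k hk).1) (fun k hk => (key k hk).2) rfl hjIZ
end S17
namespace S17
variable {d : ℕ} (S : Setup d)

lemma abs_step {w : Vec d} {j : Fin d} (h0 : (w ᵥ* S.A) j = 0) :
    0 ≤ ((fun i => |w i|) ᵥ* S.A) j := by
  rw [vm_split] at h0 ⊢
  have habs : |w j * S.A j j| ≤ ∑ i ∈ univ.erase j, |w i| * S.A i j := by
    have h1 : w j * S.A j j = -∑ i ∈ univ.erase j, w i * S.A i j := by linarith
    rw [h1, abs_neg]
    refine (Finset.abs_sum_le_sum_abs _ _).trans (le_of_eq ?_)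
    refine Finset.sum_congr rfl (fun i hi => ?_)
    rw [abs_mul, abs_of_nonneg (A_nonneg S (Finset.mem_erase.1 hi).1)]
  have hdiag : |w j| * S.A j j = -|w j * S.A j j| := by
    rw [abs_mul, abs_of_nonpos (A_diag_nonpos S j)]; ring
  show 0 ≤ |w j| * S.A j j + ∑ i ∈ univ.erase j, |w i| * S.A i j
  rw [hdiag]
  linarith

lemma cls_in {j₀ i j : Fin d} (hj₀ : ¬ IZ S j₀) (hij : De S i j) (hj : j ∈ cls S j₀) :
    i ∈ cls S j₀ := by
  have hjN : ¬ IZ S j := cls_not_IZ S hj₀ hj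
  exact (mem_cls S).2 (((mem_cls S).1 hj).trans (rch_back S hjN hij))

lemma cls_out {j₀ i j : Fin d} (hi : i ∈ cls S j₀) (hij : De S i j) : j ∈ cls S j₀ :=
  (mem_cls S).2 (Relation.ReflTransGen.tail ((mem_cls S).1 hi) hij)

lemma A_zero_into_cls {j₀ : Fin d} (hj₀ : ¬ IZ S j₀) {i j : Fin d}
    (hi : i ∉ cls S j₀) (hj : j ∈ cls S j₀) : S.A i j = 0 := by
  refine A_eq_zero S (fun h => hi (h ▸ hj)) (fun h => hi (cls_in S hj₀ h hj))

lemma A_zero_out_cls {j₀ : Fin d} {i j : Fin d}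
    (hi : i ∈ cls S j₀) (hj : j ∉ cls S j₀) : S.A i j = 0 := by
  refine A_eq_zero S (fun h => hj (h ▸ hi)) (fun h => hj (cls_out S hi h))

lemma CL_abs {j₀ : Fin d} (hj₀ : ¬ IZ S j₀) {v : Vec d}
    (hsupp : ∀ i, i ∉ cls S j₀ → v i = 0) (heq : ∀ j, (v ᵥ* S.A) j = 0) :
    ∀ j, ((fun i => |v i|) ᵥ* S.A) j = 0 := by
  set ω : Vec d := fun i => |v i| with hω
  have step1 : ∀ j, 0 ≤ (ω ᵥ* S.A) j := fun j => abs_step S (heq j)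
  have hsum : ∑ j, (ω ᵥ* S.A) j = ∑ i, ω i * ∑ j, S.A i j := by
    simp_rw [vm, Finset.mul_sum]
    rw [Finset.sum_comm]
  have hz : ∑ j, (ω ᵥ* S.A) j = 0 := by
    rw [hsum]
    refine Finset.sum_eq_zero (fun i _ => ?_)
    by_cases hi : i ∈ cls S j₀
    · rw [rowsum_eq_zero S (fun hl => cls_not_IZ S hj₀ hi (IZ_of_lk S hl))]; ring
    · rw [hω]; simp only; rw [hsupp i hi, abs_zero]; ring
  exact fun j => (Finset.sum_eq_zero_iff_of_nonneg (fun j _ => step1 j)).1 hz j (mem_univ j)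

lemma CL_zero {j₀ : Fin d} (hj₀ : ¬ IZ S j₀) {v : Vec d}
    (hsupp : ∀ i, i ∉ cls S j₀ → v i = 0) (heq : ∀ j, (v ᵥ* S.A) j = 0)
    (hz : ∃ j ∈ cls S j₀, v j = 0) : v = 0 := by
  obtain ⟨jz, hjz, hvz⟩ := hz
  set ω : Vec d := fun i => |v i| with hω
  have hωnn : ∀ i, 0 ≤ ω i := fun i => abs_nonneg _
  have hωeq := CL_abs S hj₀ hsupp heq
  have hstep : ∀ j, ω j = 0 → ∀ i, De S i j → ω i = 0 := fun j hj i hij =>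
    (zero_prop S hωnn (le_refl 0) (by rw [add_zero]; exact hωeq j) hj).2 i hij
  have hωz : ∀ i, ω i = 0 := by
    intro i
    by_cases hi : i ∈ cls S j₀
    · have hiN : ¬ IZ S i := cls_not_IZ S hj₀ hi
      have hpath : Rch S i jz := (rch_symm S hj₀ ((mem_cls S).1 hi)).trans ((mem_cls S).1 hjz)
      exact zero_prop_path S hstep hpath (by rw [hω]; simp only; rw [hvz, abs_zero])
    · rw [hω]; simp only; rw [hsupp i hi, abs_zero]
  funext i
  simpa using abs_eq_zero.1 (hωz i)

lemma CL_sign {j₀ : Fin d} (hj₀ : ¬ IZ S j₀) {v : Vec d}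
    (hsupp : ∀ i, i ∉ cls S j₀ → v i = 0) (heq : ∀ j, (v ᵥ* S.A) j = 0)
    (hnz : v ≠ 0) : (∀ i ∈ cls S j₀, 0 < v i) ∨ (∀ i ∈ cls S j₀, v i < 0) := by
  have hnozero : ∀ j ∈ cls S j₀, v j ≠ 0 := by
    intro j hj h
    exact hnz (CL_zero S hj₀ hsupp heq ⟨j, hj, h⟩)
  have hedge : ∀ s : ℝ, s = 1 ∨ s = -1 →
      ∀ j ∈ cls S j₀, 0 < s * v j → ∀ i, De S i j → 0 < s * v i := by
    intro s hs j hj hvj i hij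
    set u : Vec d := fun i => |v i| - s * v i with hu
    have hunn : ∀ i, 0 ≤ u i := by
      intro i
      rw [hu]; simp only
      rcases hs with rfl | rfl
      · simp only [one_mul]; linarith [le_abs_self (v i), abs_nonneg (v i)]
      · simp only [neg_one_mul]; linarith [neg_abs_le (v i), abs_nonneg (v i)]
    have huA : ∀ k, (u ᵥ* S.A) k = 0 := by
      intro k
      have e1 := CL_abs S hj₀ hsupp heq k
      have e2 := heq k
      rw [vm] at e1 e2 ⊢
      have hterm : ∀ i, u i * S.A i k = |v i| * S.A i k - s * (v i * S.A i k) := by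
        intro i; rw [hu]; simp only; ring
      simp_rw [hterm]
      rw [Finset.sum_sub_distrib, ← Finset.mul_sum, e2]
      have e1' : ∑ i, |v i| * S.A i k = 0 := e1
      rw [e1']; ring
    have huj : u j = 0 := by
      rw [hu]; simp only
      have habs : |v j| = s * v j := by
        rcases hs with rfl | rfl
        · rw [one_mul] at hvj ⊢; exact abs_of_pos hvj
        · rw [neg_one_mul] at hvj ⊢
          rw [abs_of_neg (by linarith)]
      rw [habs]; ring
    have hui := (zero_prop S hunn (le_refl 0) (by rw [add_zero]; exact huA j) huj).2 i hij
    have hiC : i ∈ cls S j₀ := cls_in S hj₀ hij hj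
    have hvi := hnozero i hiC
    rw [hu] at hui; simp only at hui
    have habs : |v i| = s * v i := by linarith
    have h1 : 0 ≤ s * v i := habs ▸ abs_nonneg (v i)
    have h2 : s * v i ≠ 0 := habs ▸ (abs_ne_zero.2 hvi)
    exact lt_of_le_of_ne h1 (Ne.symm h2)
  have main : ∀ s : ℝ, s = 1 ∨ s = -1 → 0 < s * v j₀ → ∀ i ∈ cls S j₀, 0 < s * v i := by
    intro s hs h0 i hiC
    have hpath : Rch S i j₀ := rch_symm S hj₀ ((mem_cls S).1 hiC)
    revert hiC
    induction hpath using Relation.ReflTransGen.head_induction_on with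
    | refl => exact fun _ => h0
    | head hac hcb ih =>
      intro haC
      have hcC := cls_out S haC hac
      exact hedge s hs _ hcC (ih hcC) _ hac
  have hj₀C : j₀ ∈ cls S j₀ := mem_self_cls S j₀
  rcases lt_or_gt_of_ne (hnozero j₀ hj₀C) with hneg | hpos
  · right
    intro i hi
    have := main (-1) (Or.inr rfl) (by rw [neg_one_mul]; linarith) i hi
    rw [neg_one_mul] at this; linarith
  · left
    intro i hi
    have := main 1 (Or.inl rfl) (by rw [one_mul]; exact hpos) i hi
    rw [one_mul] at this; exact this

end S17
namespace S17
variable {d : ℕ} (S : Setup d)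

/-- existence of a positive left-kernel vector for a conservative class -/
lemma cls_ker_exists {j₀ : Fin d} (hj₀ : ¬ IZ S j₀) :
    ∃ π : Vec d, (∀ i, i ∉ cls S j₀ → π i = 0) ∧ (∀ i ∈ cls S j₀, 0 < π i) ∧
      π ᵥ* S.A = 0 := by
  classical
  set C := cls S j₀ with hC
  let B : Matrix {x // x ∈ C} {x // x ∈ C} ℝ := fun i j => S.A i.1 j.1
  have hone : B.mulVec (fun _ => 1) = 0 := by
    funext i
    have h1 : B.mulVec (fun _ => 1) i = ∑ j : {x // x ∈ C}, S.A i.1 j.1 := by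
      simp [Matrix.mulVec, dotProduct, B]
    rw [h1]
    have h2 : ∑ j : {x // x ∈ C}, S.A i.1 j.1 = ∑ j ∈ C, S.A i.1 j :=
      Finset.sum_coe_sort C (fun j => S.A i.1 j)
    rw [h2]
    have h3 : ∑ j ∈ C, S.A i.1 j = ∑ j, S.A i.1 j := by
      refine Finset.sum_subset (Finset.subset_univ C) (fun j _ hj => ?_)
      exact A_zero_out_cls S i.2 hj
    rw [h3]
    exact rowsum_eq_zero S (fun hl => cls_not_IZ S hj₀ i.2 (IZ_of_lk S hl))
  have hone_ne : (fun _ : {x // x ∈ C} => (1:ℝ)) ≠ 0 := by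
    intro h
    have := congrFun h ⟨j₀, mem_self_cls S j₀⟩
    norm_num at this
  have hdet : B.det = 0 := Matrix.exists_mulVec_eq_zero_iff.1 ⟨_, hone_ne, hone⟩
  have hdetT : Bᵀ.det = 0 := by rw [Matrix.det_transpose]; exact hdet
  obtain ⟨v, hv0, hvk⟩ := Matrix.exists_mulVec_eq_zero_iff.2 hdetT
  set vb : Vec d := fun i => if h : i ∈ C then v ⟨i, h⟩ else 0 with hvb
  have hsupp : ∀ i, i ∉ C → vb i = 0 := fun i hi => by rw [hvb]; simp only; rw [dif_neg hi]
  have heq : ∀ j, (vb ᵥ* S.A) j = 0 := by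
    intro j
    have hres : (vb ᵥ* S.A) j = ∑ i ∈ C, vb i * S.A i j := by
      rw [vm]
      exact (Finset.sum_subset (Finset.subset_univ C)
        (fun i _ hi => by rw [hsupp i hi]; ring)).symm
    rw [hres]
    by_cases hj : j ∈ C
    · have h4 : ∑ i ∈ C, vb i * S.A i j = ∑ i : {x // x ∈ C}, vb i.1 * S.A i.1 j :=
        (Finset.sum_coe_sort C (fun i => vb i * S.A i j)).symm
      rw [h4]
      have h5 : ∀ i : {x // x ∈ C}, vb i.1 * S.A i.1 j = Bᵀ ⟨j, hj⟩ i * v i := by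
        intro i
        rw [hvb]; simp only; rw [dif_pos i.2]
        simp [Matrix.transpose_apply, B, mul_comm]
        exact Or.inl rfl
      simp_rw [h5]
      have := congrFun hvk ⟨j, hj⟩
      simpa [Matrix.mulVec, dotProduct] using this
    · refine Finset.sum_eq_zero (fun i hi => ?_)
      rw [A_zero_out_cls S hi hj]; ring
  have hvbne : vb ≠ 0 := by
    intro h
    apply hv0
    funext i
    have := congrFun h i.1
    rw [hvb] at this; simp only at this
    rw [dif_pos i.2] at this
    simpa using this
  have hvmz : vb ᵥ* S.A = 0 := by funext j; exact heq j
  rcases CL_sign S hj₀ hsupp heq hvbne with hp | hn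
  · exact ⟨vb, hsupp, hp, hvmz⟩
  · refine ⟨-vb, fun i hi => by simp [hsupp i hi], fun i hi => by simpa using hn i hi, ?_⟩
    rw [Matrix.neg_vecMul, hvmz, neg_zero]

/-- existence and nonnegativity of the equilibrium on the IZ block -/
lemma IZ_exists : ∃ xz : Vec d, (∀ i, ¬ IZ S i → xz i = 0) ∧ (∀ i, 0 ≤ xz i) ∧
    (∀ j, IZ S j → (xz ᵥ* S.A) j + S.b j = 0) ∧ (∀ j, ¬ IZ S j → (xz ᵥ* S.A) j = 0) := by
  classical
  let σ := {i // IZ S i}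
  let B : Matrix σ σ ℝ := fun i j => S.A i.1 j.1
  have hmemiff : ∀ x, x ∈ univ.filter (IZ S) ↔ IZ S x := by intro x; simp
  -- extension of a subtype vector by zero
  let ext : (σ → ℝ) → Vec d := fun v i => if h : IZ S i then v ⟨i, h⟩ else 0
  have hext_supp : ∀ v : σ → ℝ, ∀ i, ¬ IZ S i → ext v i = 0 := fun v i hi => dif_neg hi
  have hext_vm : ∀ (v : σ → ℝ) (j : σ), (ext v ᵥ* S.A) j.1 = ∑ i : σ, v i * B i j := by
    intro v j
    rw [vm_restrict S (P := IZ S) (hext_supp v)]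
    rw [Finset.sum_subtype (univ.filter (IZ S)) hmemiff (fun i => ext v i * S.A i j.1)]
    refine Finset.sum_congr rfl (fun i _ => ?_)
    have : ext v i.1 = v i := by simp only [ext]; rw [dif_pos i.2]
    rw [this]
  have hext_mv : ∀ (v : σ → ℝ) (i : Fin d), (S.A *ᵥ ext v) i = ∑ j : σ, S.A i j.1 * v j := by
    intro v i
    rw [mv_restrict S (P := IZ S) (hext_supp v)]
    rw [Finset.sum_subtype (univ.filter (IZ S)) hmemiff (fun j => S.A i j * ext v j)]
    refine Finset.sum_congr rfl (fun j _ => ?_)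
    have : ext v j.1 = v j := by simp only [ext]; rw [dif_pos j.2]
    rw [this]
  -- row-side injectivity hence surjectivity
  have hinj : Function.Injective B.vecMulLinear := by
    rw [injective_iff_map_eq_zero]
    intro v hv
    have hz : ext v = 0 := by
      refine IZ_uniq S (hext_supp v) (fun j hj => ?_)
      have h1 := hext_vm v ⟨j, hj⟩
      rw [h1]
      have := congrFun hv
      have h2 : ∀ j' : σ, ∑ i : σ, v i * B i j' = 0 := by
        intro j'
        have := congrFun hv j'
        rw [Matrix.vecMulLinear_apply] at this
        simpa [Matrix.vecMul, dotProduct] using this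
      exact h2 ⟨j, hj⟩
    funext i
    have := congrFun hz i.1
    simp only [ext] at this
    rw [dif_pos i.2] at this
    simpa using this
  have hsurj : Function.Surjective B.vecMulLinear := LinearMap.injective_iff_surjective.1 hinj
  obtain ⟨xs, hxs⟩ := hsurj (fun j => -S.b j.1)
  set xz : Vec d := ext xs with hxz
  have hxz_vm : ∀ j, IZ S j → (xz ᵥ* S.A) j + S.b j = 0 := by
    intro j hj
    have h1 := hext_vm xs ⟨j, hj⟩
    have h2 := congrFun hxs ⟨j, hj⟩
    rw [Matrix.vecMulLinear_apply] at h2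
    have h3 : ∑ i : σ, xs i * B i ⟨j, hj⟩ = -S.b j := by
      rw [← h2]; simp [Matrix.vecMul, dotProduct]
    rw [hxz, h1, h3]; ring
  have hxz_vm' : ∀ j, ¬ IZ S j → (xz ᵥ* S.A) j = 0 := by
    intro j hj
    rw [vm_restrict S (P := IZ S) (by intro i hi; rw [hxz]; exact hext_supp xs i hi)]
    refine Finset.sum_eq_zero (fun i hi => ?_)
    rw [A_zero_IZ_N S (Finset.mem_filter.1 hi).2 hj]; ring
  -- column-side injectivity hence surjectivity
  have hcinj : Function.Injective B.mulVecLin := by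
    rw [injective_iff_map_eq_zero]
    intro y hy
    have hmv0 : ∀ i, IZ S i → (S.A *ᵥ ext y) i = 0 := by
      intro i hi
      rw [hext_mv y i]
      have := congrFun hy ⟨i, hi⟩
      rw [Matrix.mulVecLin_apply] at this
      simpa [Matrix.mulVec, dotProduct] using this
    have h1 := col_nonneg S (hext_supp y) (fun i hi => le_of_eq (hmv0 i hi))
    have h2 : ∀ i, 0 ≤ -(ext y) i := by
      have hsupp' : ∀ i, ¬ IZ S i → (-(ext y)) i = 0 := by
        intro i hi; simp [hext_supp y i hi]
      have hle' : ∀ i, IZ S i → (S.A *ᵥ (-(ext y))) i ≤ 0 := by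
        intro i hi
        rw [Matrix.mulVec_neg]
        simp [hmv0 i hi]
      exact fun i => col_nonneg S hsupp' hle' i
    funext i
    have ha := h1 i.1
    have hb := h2 i.1
    have : ext y i.1 = 0 := by linarith
    simp only [ext] at this
    rw [dif_pos i.2] at this
    simpa using this
  have hcsurj : Function.Surjective B.mulVecLin := LinearMap.injective_iff_surjective.1 hcinj
  -- nonnegativity via duality
  have hxznn : ∀ i, 0 ≤ xz i := by
    intro i₀
    by_cases hi₀ : IZ S i₀
    swap
    · rw [hxz]; rw [hext_supp xs i₀ hi₀]
    obtain ⟨y, hy⟩ := hcsurj (fun i => -(if i = ⟨i₀, hi₀⟩ then 1 else 0))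
    set yb : Vec d := ext y with hyb
    have hmvy : ∀ i, (S.A *ᵥ yb) i = -(if i = i₀ then 1 else 0) := by
      intro i
      by_cases hi : IZ S i
      · rw [hyb, hext_mv y i]
        have := congrFun hy ⟨i, hi⟩
        rw [Matrix.mulVecLin_apply] at this
        have h4 : ∑ j : σ, S.A i j.1 * y j = -(if (⟨i,hi⟩:σ) = ⟨i₀,hi₀⟩ then (1:ℝ) else 0) := by
          rw [← this]; simp [Matrix.mulVec, dotProduct, B]
        rw [h4]
        congr 1
        simp [Subtype.ext_iff]
      · rw [hyb, mv_restrict S (P := IZ S) (hext_supp y)]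
        have hz : ∑ j ∈ univ.filter (IZ S), S.A i j * ext y j = 0 :=
          Finset.sum_eq_zero (fun j hj => by
            rw [A_zero_N_IZ S hi (Finset.mem_filter.1 hj).2]; ring)
        rw [hz, if_neg (fun h => hi (by rw [h]; exact hi₀))]; ring
    have hynn : ∀ t, 0 ≤ yb t := by
      refine col_nonneg S (fun t ht => by rw [hyb]; exact hext_supp y t ht) (fun t ht => ?_)
      rw [hmvy t]
      split <;> norm_num
    -- duality computation
    have hdual : ∑ t, xz t * (S.A *ᵥ yb) t = ∑ j, (xz ᵥ* S.A) j * yb j := by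
      simp_rw [mv, vm, Finset.mul_sum, Finset.sum_mul]
      rw [Finset.sum_comm]
      refine Finset.sum_congr rfl (fun j _ => Finset.sum_congr rfl (fun i _ => by ring))
    have hlhs : ∑ t, xz t * (S.A *ᵥ yb) t = -xz i₀ := by
      simp_rw [hmvy]
      have : ∀ t, xz t * -(if t = i₀ then (1:ℝ) else 0)
          = -(if t = i₀ then xz t else 0) := by
        intro t; split <;> ring
      simp_rw [this]
      rw [Finset.sum_neg_distrib, Finset.sum_ite_eq' univ i₀ (fun t => xz t), if_pos (mem_univ i₀)]
    have hrhs : ∑ j, (xz ᵥ* S.A) j * yb j = ∑ j, -(S.b j * yb j) := by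
      refine Finset.sum_congr rfl (fun j _ => ?_)
      by_cases hj : IZ S j
      · have := hxz_vm j hj
        have h5 : (xz ᵥ* S.A) j = -S.b j := by linarith
        rw [h5]; ring
      · rw [hyb, hext_supp y j hj]; ring
    have hfin : xz i₀ = ∑ j, S.b j * yb j := by
      have := hlhs.symm.trans (hdual.trans hrhs)
      rw [Finset.sum_neg_distrib] at this
      linarith
    rw [hfin]
    exact Finset.sum_nonneg (fun j _ => mul_nonneg (b_nonneg S j) (hynn j))
  exact ⟨xz, fun i hi => hext_supp xs i hi, hxznn, hxz_vm, hxz_vm'⟩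

end S17
namespace S17
variable {d : ℕ} (S : Setup d)

lemma sg_mem_span {i : Fin d} (hi : IZ S i) : sg i ∈ stoichSpan d S.E := by
  obtain ⟨l, hl, hr⟩ := hi
  induction hr using Relation.ReflTransGen.head_induction_on with
  | refl =>
    have hgen : (0:Vec d) - sg l ∈ stoichSpan d S.E :=
      Submodule.subset_span ⟨(sg l, (0:Vec d)), hl, rfl⟩
    have : sg l = -((0:Vec d) - sg l) := by simp
    rw [this]
    exact neg_mem hgen
  | head hac hcb ih =>
    next a c =>
    have hgen : sg c - sg a ∈ stoichSpan d S.E :=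
      Submodule.subset_span ⟨(sg a, sg c), hac.2, rfl⟩
    have : sg a = sg c - (sg c - sg a) := by abel
    rw [this]
    exact sub_mem ih hgen

lemma sg_sub_mem {i j : Fin d} (h : Rch S i j) : sg j - sg i ∈ stoichSpan d S.E := by
  induction h with
  | refl => simp
  | tail p e ih =>
    next c j' =>
    have hgen : sg j' - sg c ∈ stoichSpan d S.E :=
      Submodule.subset_span ⟨(sg c, sg j'), e.2, rfl⟩
    have : sg j' - sg i = (sg j' - sg c) + (sg c - sg i) := by abel
    rw [this]
    exact add_mem hgen ih

lemma sum_sg_over (C : Finset (Fin d)) (a : Fin d) :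
    ∑ i ∈ C, sg a i = if a ∈ C then (1:ℝ) else 0 := by
  have h : ∀ i, sg a i = if i = a then (1:ℝ) else 0 := fun i => sg_apply a i
  simp_rw [h]
  exact Finset.sum_ite_eq' C a (fun _ => (1:ℝ))

lemma span_clsSum {j : Fin d} (hj : ¬ IZ S j) :
    ∀ v ∈ stoichSpan d S.E, ∑ i ∈ cls S j, v i = 0 := by
  let φ : Vec d →ₗ[ℝ] ℝ :=
    { toFun := fun v => ∑ i ∈ cls S j, v i
      map_add' := fun x y => by simp [Finset.sum_add_distrib]
      map_smul' := fun c x => by simp [Finset.mul_sum] }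
  have hspan : stoichSpan d S.E ≤ LinearMap.ker φ := by
    rw [stoichSpan, Submodule.span_le]
    rintro w ⟨e, he, rfl⟩
    simp only [SetLike.mem_coe, LinearMap.mem_ker]
    show ∑ i ∈ cls S j, (e.2 - e.1) i = 0
    have hsplit : ∑ i ∈ cls S j, (e.2 - e.1) i
        = ∑ i ∈ cls S j, e.2 i - ∑ i ∈ cls S j, e.1 i := by
      simp [Finset.sum_sub_distrib]
    rw [hsplit]
    rcases source_shape S he with h0 | ⟨a, ha⟩
    · have h1 : ∑ i ∈ cls S j, e.1 i = 0 := by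
        refine Finset.sum_eq_zero (fun i _ => by rw [h0]; rfl)
      have h2 : ∑ i ∈ cls S j, e.2 i = 0 := by
        refine Finset.sum_eq_zero (fun i hi => ?_)
        exact (ml1N S).2 e he h0 i (cls_not_IZ S hj hi)
      rw [h1, h2]; ring
    · rw [ha, sum_sg_over]
      rcases target_shape S he ha with h0 | ⟨m, hma, hm⟩
      · have hLk : Lk S a := by
          have : e = (sg a, (0:Vec d)) := by
            cases e with | mk x y => simp only at ha h0; rw [ha, h0]
          show (sg a, (0:Vec d)) ∈ S.E
          rw [← this]; exact he
        have hnot : a ∉ cls S j := fun hmem => cls_not_IZ S hj hmem (IZ_of_lk S hLk)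
        have h2 : ∑ i ∈ cls S j, e.2 i = 0 := by
          refine Finset.sum_eq_zero (fun i _ => by rw [h0]; rfl)
        rw [h2, if_neg hnot]; ring
      · rw [hm, sum_sg_over]
        have hde : De S a m := by
          refine ⟨fun h => hma h.symm, ?_⟩
          rw [← ha, ← hm]; exact mem_E_pair S he
        have hiff : m ∈ cls S j ↔ a ∈ cls S j :=
          ⟨fun h => cls_in S hj hde h, fun h => cls_out S h hde⟩
        rw [if_congr hiff rfl rfl]
        ring
  intro v hv
  exact hspan hv

lemma mem_span_of_clsSum {v : Vec d} (hv : ∀ j, ¬ IZ S j → ∑ i ∈ cls S j, v i = 0) :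
    v ∈ stoichSpan d S.E := by
  classical
  have hdecomp : v = ∑ i, v i • sg i := by
    funext k
    rw [Finset.sum_apply]
    have h : ∀ i, (v i • sg i) k = if k = i then v i else 0 := by
      intro i
      rw [Pi.smul_apply, sg_apply, smul_eq_mul]
      split <;> ring
    simp_rw [h]
    rw [Finset.sum_ite_eq univ k v, if_pos (mem_univ k)]
  set Tn := univ.filter (fun i => ¬ IZ S i) with hTn
  have hTnmem : ∀ i, i ∈ Tn ↔ ¬ IZ S i := by intro i; rw [hTn]; simp
  have hsplit : ∑ i, v i • sg i
      = ∑ i ∈ univ.filter (fun i => IZ S i), v i • sg i + ∑ i ∈ Tn, v i • sg i := by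
    rw [hTn]
    exact (Finset.sum_filter_add_sum_filter_not _ _ _).symm
  have hpart1 : ∑ i ∈ univ.filter (fun i => IZ S i), v i • sg i ∈ stoichSpan d S.E :=
    Submodule.sum_mem _ (fun i hi =>
      Submodule.smul_mem _ _ (sg_mem_span S (Finset.mem_filter.1 hi).2))
  -- per-class averaging
  set csum : Fin d → Vec d := fun i => ∑ k ∈ cls S i, sg k with hcsum
  set n : Fin d → ℝ := fun i => ((cls S i).card : ℝ) with hn
  have hnpos : ∀ i, 0 < n i := by
    intro i
    show (0:ℝ) < ((cls S i).card : ℝ)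
    have : 0 < (cls S i).card := Finset.card_pos.2 ⟨i, mem_self_cls S i⟩
    exact_mod_cast this
  have hterm : ∀ i ∈ Tn, v i • sg i
      = v i • (sg i - (1 / n i) • csum i) + (v i / n i) • csum i := by
    intro i _
    have h1 : v i • ((1 / n i) • csum i) = (v i / n i) • csum i := by
      rw [smul_smul]
      congr 1
      field_simp
    rw [smul_sub, h1]
    abel
  have hpartA : ∀ i ∈ Tn, sg i - (1 / n i) • csum i ∈ stoichSpan d S.E := by
    intro i hi
    have hin : ∑ k ∈ cls S i, (sg i - sg k) ∈ stoichSpan d S.E := by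
      refine Submodule.sum_mem _ (fun k hk => ?_)
      have h2 : sg i - sg k = -(sg k - sg i) := by abel
      rw [h2]
      exact neg_mem (sg_sub_mem S ((mem_cls S).1 hk))
    have heq2 : sg i - (1 / n i) • csum i = (1 / n i) • ∑ k ∈ cls S i, (sg i - sg k) := by
      rw [Finset.sum_sub_distrib, Finset.sum_const, smul_sub]
      have hc : ((cls S i).card : ℝ) = n i := rfl
      rw [← Nat.cast_smul_eq_nsmul (R := ℝ), hc, smul_smul, one_div, inv_mul_cancel₀ (ne_of_gt (hnpos i)),
        one_smul]
    rw [heq2]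
    exact Submodule.smul_mem _ _ hin
  have hpartB : ∑ i ∈ Tn, (v i / n i) • csum i = 0 := by
    funext ℓ
    rw [Finset.sum_apply]
    have h3 : ∀ i, ((v i / n i) • csum i) ℓ = if ℓ ∈ cls S i then v i / n i else 0 := by
      intro i
      rw [Pi.smul_apply, hcsum]
      simp only
      rw [Finset.sum_apply, smul_eq_mul]
      have : ∑ k ∈ cls S i, sg k ℓ = if ℓ ∈ cls S i then (1:ℝ) else 0 := by
        have hh : ∀ k, sg k ℓ = if ℓ = k then (1:ℝ) else 0 := fun k => sg_apply k ℓ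
        simp_rw [hh]
        exact Finset.sum_ite_eq (cls S i) ℓ (fun _ => (1:ℝ))
      rw [this]
      split <;> ring
    simp_rw [h3]
    by_cases hℓ : IZ S ℓ
    · rw [Pi.zero_apply]
      refine Finset.sum_eq_zero (fun i hi => ?_)
      rw [if_neg (fun hmem => (cls_not_IZ S ((hTnmem i).1 hi) hmem) hℓ)]
    · rw [Pi.zero_apply, ← Finset.sum_filter]
      have hset : Tn.filter (fun i => ℓ ∈ cls S i) = cls S ℓ := by
        ext i
        simp only [Finset.mem_filter, hTnmem, mem_cls]
        constructor
        · rintro ⟨hiN, hrch⟩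
          exact rch_symm S hiN hrch
        · intro hrch
          have hiN : ¬ IZ S i := fun h => hℓ (IZ_of_rch S hrch h)
          exact ⟨hiN, rch_symm S hℓ hrch⟩
      rw [hset]
      have hcard : ∀ i ∈ cls S ℓ, n i = n ℓ := by
        intro i hi
        rw [hn]
        simp only
        rw [cls_eq S hℓ hi]
      calc ∑ i ∈ cls S ℓ, v i / n i = ∑ i ∈ cls S ℓ, v i / n ℓ :=
            Finset.sum_congr rfl (fun i hi => by rw [hcard i hi])
        _ = (∑ i ∈ cls S ℓ, v i) / n ℓ := by rw [Finset.sum_div]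
        _ = 0 := by rw [hv ℓ hℓ, zero_div]
  rw [hdecomp, hsplit]
  refine add_mem hpart1 ?_
  have : ∑ i ∈ Tn, v i • sg i
      = ∑ i ∈ Tn, (v i • (sg i - (1 / n i) • csum i) + (v i / n i) • csum i) :=
    Finset.sum_congr rfl hterm
  rw [this, Finset.sum_add_distrib, hpartB, add_zero]
  exact Submodule.sum_mem _ (fun i hi => Submodule.smul_mem _ _ (hpartA i hi))

end S17
namespace S17
variable {d : ℕ} (S : Setup d)

lemma b_zero_N {j : Fin d} (hj : ¬ IZ S j) : S.b j = 0 := by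
  refine b_zero S (fun hFd => ?_)
  obtain ⟨e, he, h1, h2⟩ := hFd
  exact h2 ((ml1N S).2 e he h1 j hj)

lemma IZ_fed {i : Fin d} (hi : IZ S i) : ∃ f, Fd S f ∧ Rch S f i := by
  set W : Set (Fin d) := {j | ¬ ∃ f, Fd S f ∧ Rch S f j} with hW
  have hin : ∀ a c, De S a c → c ∈ W → a ∈ W := by
    intro a c hac hc ⟨f, hf, hr⟩
    exact hc ⟨f, hf, hr.tail hac⟩
  have hfd : ∀ e ∈ S.E, e.1 = 0 → ∀ w ∈ W, e.2 w = 0 := by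
    intro e he h1 w hw
    by_contra h2
    exact hw ⟨w, ⟨e, he, h1, h2⟩, rch_refl S w⟩
  have h := ML2 S W hin hfd
  by_contra hcon
  exact no_reach_leak S h.1 h.2 (fun hex => hcon hex) hi

/-- positivity on the IZ block for nonnegative equilibria -/
lemma pos_IZ {x : Vec d} (hx : ∀ i, 0 ≤ x i)
    (heq : ∀ j, (x ᵥ* S.A) j + S.b j = 0) : ∀ i, IZ S i → 0 < x i := by
  intro i hi
  rcases lt_or_eq_of_le (hx i) with h | h
  · exact h
  exfalso
  have hstep : ∀ j, x j = 0 → ∀ k, De S k j → x k = 0 :=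
    fun j hj k hkj => (zero_prop S hx (b_nonneg S j) (heq j) hj).2 k hkj
  obtain ⟨f, hFd, hr⟩ := IZ_fed S hi
  have hxf : x f = 0 := zero_prop_path S hstep hr h.symm
  have hbf : S.b f = 0 := (zero_prop S hx (b_nonneg S f) (heq f) hxf).1
  exact absurd hbf (ne_of_gt (b_pos S hFd))

lemma vm_restrictF (C : Finset (Fin d)) {x : Vec d} (hsupp : ∀ i, i ∉ C → x i = 0)
    (j : Fin d) : (x ᵥ* S.A) j = ∑ i ∈ C, x i * S.A i j := by
  rw [vm]
  exact (Finset.sum_subset (Finset.subset_univ C)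
    (fun i _ hi => by rw [hsupp i hi]; ring)).symm

/-- restriction of an equilibrium to a conservative class is a global kernel vector -/
lemma cls_restrict {j₀ : Fin d} (hj₀ : ¬ IZ S j₀) (x : Vec d)
    (heqc : ∀ j ∈ cls S j₀, (x ᵥ* S.A) j = 0) :
    ∀ j, ((fun i => if i ∈ cls S j₀ then x i else 0) ᵥ* S.A) j = 0 := by
  intro j
  have hsupp : ∀ i, i ∉ cls S j₀ → (if i ∈ cls S j₀ then x i else 0) = 0 :=
    fun i hi => if_neg hi
  rw [vm_restrictF S (cls S j₀) hsupp j]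
  by_cases hj : j ∈ cls S j₀
  · have h1 : ∑ i ∈ cls S j₀, (if i ∈ cls S j₀ then x i else 0) * S.A i j
        = ∑ i ∈ cls S j₀, x i * S.A i j :=
      Finset.sum_congr rfl (fun i hi => by rw [if_pos hi])
    rw [h1]
    have h2 : (x ᵥ* S.A) j = ∑ i ∈ cls S j₀, x i * S.A i j := by
      rw [vm]
      exact (Finset.sum_subset (Finset.subset_univ _) (fun i _ hi => by
        rw [A_zero_into_cls S hj₀ hi hj]; ring)).symm
    rw [← h2]
    exact heqc j hj
  · exact Finset.sum_eq_zero (fun i hi => by rw [A_zero_out_cls S hi hj]; ring)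

/-- uniqueness of equilibria within a stoichiometric class -/
lemma equil_unique {x y : Vec d} (hxy : x - y ∈ stoichSpan d S.E)
    (hx : x ᵥ* S.A + S.b = 0) (hy : y ᵥ* S.A + S.b = 0) : x = y := by
  set v := x - y with hv
  have hvA : ∀ j, (v ᵥ* S.A) j = 0 := by
    intro j
    have h1 : (x ᵥ* S.A) j + S.b j = 0 := by
      have := congrFun hx j; simpa using this
    have h2 : (y ᵥ* S.A) j + S.b j = 0 := by
      have := congrFun hy j; simpa using this
    rw [hv, Matrix.sub_vecMul]
    simp only [Pi.sub_apply]
    linarith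
  have hIZz : ∀ i, IZ S i → v i = 0 := by
    have hw : (fun i => if IZ S i then v i else 0) = 0 := by
      refine IZ_uniq S (fun i hi => if_neg hi) (fun j hj => ?_)
      have hsupp : ∀ i, ¬ IZ S i → (if IZ S i then v i else 0) = 0 := fun i hi => if_neg hi
      rw [vm_restrict S (P := IZ S) hsupp]
      have h1 : ∑ i ∈ univ.filter (IZ S), (if IZ S i then v i else 0) * S.A i j
          = ∑ i ∈ univ.filter (IZ S), v i * S.A i j :=
        Finset.sum_congr rfl (fun i hi => by rw [if_pos (Finset.mem_filter.1 hi).2])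
      rw [h1]
      have h2 : (v ᵥ* S.A) j = ∑ i ∈ univ.filter (IZ S), v i * S.A i j := by
        rw [vm, ← Finset.sum_filter_add_sum_filter_not univ (IZ S)]
        have h3 : ∑ i ∈ univ.filter (fun i => ¬ IZ S i), v i * S.A i j = 0 :=
          Finset.sum_eq_zero (fun i hi => by
            rw [A_zero_N_IZ S (Finset.mem_filter.1 hi).2 hj]; ring)
        rw [h3, add_zero]
      rw [← h2]
      exact hvA j
    intro i hi
    have := congrFun hw i
    rw [if_pos hi] at this
    simpa using this
  have hNz : ∀ i, ¬ IZ S i → v i = 0 := by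
    intro i hi
    set vC : Vec d := fun k => if k ∈ cls S i then v k else 0 with hvC
    have hvCA := cls_restrict S hi v (fun j _ => hvA j)
    have hsupp : ∀ k, k ∉ cls S i → vC k = 0 := fun k hk => if_neg hk
    have hsum : ∑ k ∈ cls S i, v k = 0 := span_clsSum S hi v hxy
    by_cases hvC0 : vC = 0
    · have := congrFun hvC0 i
      rw [hvC] at this
      simp only at this
      rw [if_pos (mem_self_cls S i)] at this
      exact this
    · exfalso
      rcases CL_sign S hi hsupp hvCA hvC0 with hp | hn
      · have : 0 < ∑ k ∈ cls S i, vC k :=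
          Finset.sum_pos hp ⟨i, mem_self_cls S i⟩
        have heq : ∑ k ∈ cls S i, vC k = ∑ k ∈ cls S i, v k :=
          Finset.sum_congr rfl (fun k hk => by rw [hvC]; simp only; rw [if_pos hk])
        rw [heq, hsum] at this
        exact lt_irrefl 0 this
      · have : ∑ k ∈ cls S i, vC k < 0 :=
          Finset.sum_neg hn ⟨i, mem_self_cls S i⟩
        have heq : ∑ k ∈ cls S i, vC k = ∑ k ∈ cls S i, v k :=
          Finset.sum_congr rfl (fun k hk => by rw [hvC]; simp only; rw [if_pos hk])
        rw [heq, hsum] at this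
        exact lt_irrefl 0 this
  have : v = 0 := by
    funext i
    by_cases hi : IZ S i
    · exact hIZz i hi
    · exact hNz i hi
  have := sub_eq_zero.1 (hv ▸ this)
  exact this

end S17
namespace S17
variable {d : ℕ} (S : Setup d)

lemma equil_exists (x₀ : Vec d) (hx₀ : ∀ i, 0 ≤ x₀ i) :
    ∃ x : Vec d, (x - x₀ ∈ stoichSpan d S.E ∧ ∀ i, 0 ≤ x i) ∧
      x ᵥ* S.A + S.b = 0 := by
  classical
  obtain ⟨xz, hxzsupp, hxznn, hxzeq, hxzeq'⟩ := IZ_exists S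
  set CS := (univ.filter (fun i => ¬ IZ S i)).image (cls S) with hCS
  have hCSprop : ∀ C ∈ CS, ∃ j₀, ¬ IZ S j₀ ∧ C = cls S j₀ := by
    intro C hC
    rw [hCS] at hC
    obtain ⟨j, hj, hjC⟩ := Finset.mem_image.1 hC
    exact ⟨j, (Finset.mem_filter.1 hj).2, hjC.symm⟩
  have hπex : ∀ C ∈ CS, ∃ π : Vec d,
      (∀ i, i ∉ C → π i = 0) ∧ (∀ i ∈ C, 0 < π i) ∧ π ᵥ* S.A = 0 := by
    intro C hC
    obtain ⟨j₀, hj₀, rfl⟩ := hCSprop C hC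
    exact cls_ker_exists S hj₀
  choose π hπ1 hπ2 hπ3 using hπex
  have hCnIZ : ∀ C (hC : C ∈ CS), ∀ i ∈ C, ¬ IZ S i := by
    intro C hC i hi
    obtain ⟨j₀, hj₀, rfl⟩ := hCSprop C hC
    exact cls_not_IZ S hj₀ hi
  have hdenpos : ∀ C (hC : C ∈ CS), 0 < ∑ i ∈ C, π C hC i := by
    intro C hC
    obtain ⟨j₀, hj₀, hCeq⟩ := hCSprop C hC
    refine Finset.sum_pos (hπ2 C hC) ⟨j₀, ?_⟩
    rw [hCeq]; exact mem_self_cls S j₀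
  have hclsmem : ∀ i, ¬ IZ S i → cls S i ∈ CS := fun i hi =>
    Finset.mem_image.2 ⟨i, Finset.mem_filter.2 ⟨mem_univ i, hi⟩, rfl⟩
  have hdisj : ∀ C (hC : C ∈ CS) (C' : Finset (Fin d)) (hC' : C' ∈ CS) (i : Fin d),
      i ∈ C → i ∈ C' → C = C' := by
    intro C hC C' hC' i hi hi'
    obtain ⟨j₀, hj₀, rfl⟩ := hCSprop C hC
    obtain ⟨j₀', hj₀', rfl⟩ := hCSprop C' hC'
    rw [← cls_eq S hj₀ hi, ← cls_eq S hj₀' hi']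
  set sc : (C : Finset (Fin d)) → C ∈ CS → ℝ :=
    fun C hC => (∑ i ∈ C, x₀ i) / (∑ i ∈ C, π C hC i) with hsc
  have hscnn : ∀ C (hC : C ∈ CS), 0 ≤ sc C hC := fun C hC =>
    div_nonneg (Finset.sum_nonneg (fun i _ => hx₀ i)) (hdenpos C hC).le
  set xhat : Vec d := xz + ∑ C ∈ CS.attach, sc C.1 C.2 • π C.1 C.2 with hxhat
  have hxhat_app : ∀ k, xhat k = xz k + ∑ C ∈ CS.attach, sc C.1 C.2 * π C.1 C.2 k := by
    intro k
    rw [hxhat, Pi.add_apply, Finset.sum_apply]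
    simp [smul_eq_mul]
  have happIZ : ∀ k, IZ S k → xhat k = xz k := by
    intro k hk
    rw [hxhat_app k]
    have : ∑ C ∈ CS.attach, sc C.1 C.2 * π C.1 C.2 k = 0 := by
      refine Finset.sum_eq_zero (fun C _ => ?_)
      have : k ∉ C.1 := fun hmem => (hCnIZ C.1 C.2 k hmem) hk
      rw [hπ1 C.1 C.2 k this]; ring
    rw [this, add_zero]
  have happN : ∀ k (hk : ¬ IZ S k),
      xhat k = sc (cls S k) (hclsmem k hk) * π (cls S k) (hclsmem k hk) k := by
    intro k hk
    rw [hxhat_app k, hxzsupp k hk, zero_add]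
    refine Finset.sum_eq_single_of_mem (f := fun C : {x // x ∈ CS} => sc C.1 C.2 * π C.1 C.2 k)
      ⟨cls S k, hclsmem k hk⟩ (Finset.mem_attach _ _) ?_
    intro b _ hbne
    have hknb : k ∉ b.1 := by
      intro hmem
      exact hbne (Subtype.ext (hdisj b.1 b.2 (cls S k) (hclsmem k hk) k hmem (mem_self_cls S k)))
    show sc b.1 b.2 * π b.1 b.2 k = 0
    rw [hπ1 b.1 b.2 k hknb]; ring
  have hnn : ∀ k, 0 ≤ xhat k := by
    intro k
    by_cases hk : IZ S k
    · rw [happIZ k hk]; exact hxznn k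
    · rw [happN k hk]
      exact mul_nonneg (hscnn _ _) (hπ2 _ _ k (mem_self_cls S k)).le
  have hclssum : ∀ j₀ (hj₀ : ¬ IZ S j₀),
      ∑ k ∈ cls S j₀, xhat k = ∑ k ∈ cls S j₀, x₀ k := by
    intro j₀ hj₀
    have h1 : ∑ k ∈ cls S j₀, xhat k
        = ∑ k ∈ cls S j₀, ∑ C ∈ CS.attach, sc C.1 C.2 * π C.1 C.2 k := by
      refine Finset.sum_congr rfl (fun k hk => ?_)
      rw [hxhat_app k, hxzsupp k (cls_not_IZ S hj₀ hk), zero_add]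
    rw [h1, Finset.sum_comm]
    have h2 : ∀ C ∈ CS.attach, (C : {x // x ∈ CS}) ≠ ⟨cls S j₀, hclsmem j₀ hj₀⟩ →
        ∑ k ∈ cls S j₀, sc C.1 C.2 * π C.1 C.2 k = 0 := by
      intro C _ hCne
      refine Finset.sum_eq_zero (fun k hk => ?_)
      have : k ∉ C.1 := by
        intro hmem
        exact hCne (Subtype.ext (hdisj C.1 C.2 (cls S j₀) (hclsmem j₀ hj₀) k hmem hk))
      rw [hπ1 C.1 C.2 k this]; ring
    rw [Finset.sum_eq_single_of_mem (f := fun C : {x // x ∈ CS} => ∑ k ∈ cls S j₀, sc C.1 C.2 * π C.1 C.2 k)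
      ⟨cls S j₀, hclsmem j₀ hj₀⟩ (Finset.mem_attach _ _) h2]
    rw [← Finset.mul_sum]
    simp only
    rw [hsc]
    simp only
    rw [div_mul_cancel₀ _ (ne_of_gt (hdenpos (cls S j₀) (hclsmem j₀ hj₀)))]
  have heq : xhat ᵥ* S.A + S.b = 0 := by
    have hsumA : (∑ C ∈ CS.attach, sc C.1 C.2 • π C.1 C.2) ᵥ* S.A = 0 := by
      rw [← Matrix.vecMulLinear_apply, map_sum]
      refine Finset.sum_eq_zero (fun C _ => ?_)
      rw [LinearMap.map_smul, Matrix.vecMulLinear_apply, hπ3 C.1 C.2, smul_zero]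
    funext j
    rw [hxhat, Matrix.add_vecMul, hsumA]
    simp only [Pi.add_apply, Pi.zero_apply, add_zero]
    by_cases hj : IZ S j
    · exact hxzeq j hj
    · rw [hxzeq' j hj, b_zero_N S hj]; ring
  refine ⟨xhat, ⟨?_, hnn⟩, heq⟩
  refine mem_span_of_clsSum S (fun j hj => ?_)
  have : ∑ i ∈ cls S j, (xhat - x₀) i = ∑ i ∈ cls S j, xhat i - ∑ i ∈ cls S j, x₀ i := by
    simp [Finset.sum_sub_distrib]
  rw [this, hclssum j hj, sub_self]

end S17

/-- For a first order endotactic mass-action system, each stoichiometric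
compatibility class `(x₀ + S_G) ∩ ℝ₊^d` contains exactly one equilibrium of
`ẋ = xA + b`, and this equilibrium is entrywise positive whenever the class is
positive (contains an entrywise positive point). -/
theorem stmt17 {d : ℕ} (E : Finset (Edge d)) (κ : Edge d → ℝ)
    (hsimple : ∀ e ∈ E, e.1 ≠ e.2)
    (hκ : ∀ e ∈ E, 0 < κ e)
    (hnat : ∀ y, InV E y → ∀ i, ∃ n : ℕ, y i = (n : ℝ))
    (hfo : ∀ y, IsSource E y → ∑ i, y i ≤ 1)
    (hnored : ∀ i : Fin d, ∃ e ∈ E, e.2 i ≠ e.1 i)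
    (hendo : Endotactic E)
    (A : Matrix (Fin d) (Fin d) ℝ)
    (hA : ∀ i j, A i j =
      ∑ e ∈ E.filter (fun e => e.1 = (Pi.single i 1 : Vec d)), κ e * (e.2 j - e.1 j))
    (b : Vec d)
    (hb : ∀ i, b i = ∑ e ∈ E.filter (fun e => e.1 = (0 : Vec d)), κ e * e.2 i) :
    ∀ x₀ : Vec d, (∀ i, 0 ≤ x₀ i) →
      (∃! x : Vec d, (x - x₀ ∈ stoichSpan d E ∧ ∀ i, 0 ≤ x i) ∧ x ᵥ* A + b = 0) ∧
      ((∃ z : Vec d, z - x₀ ∈ stoichSpan d E ∧ ∀ i, 0 < z i) →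
        ∀ x : Vec d, (x - x₀ ∈ stoichSpan d E ∧ ∀ i, 0 ≤ x i) → x ᵥ* A + b = 0 →
          ∀ i, 0 < x i) := by
  intro x₀ hx₀
  let S : S17.Setup d := ⟨E, κ, A, b, hsimple, hκ, hnat, hfo, hnored, hendo, hA, hb⟩
  obtain ⟨xhat, ⟨hxhspan, hxhnn⟩, hxheq⟩ := S17.equil_exists S x₀ hx₀
  constructor
  · refine ⟨xhat, ⟨⟨hxhspan, hxhnn⟩, hxheq⟩, ?_⟩
    rintro y ⟨⟨hyspan, hynn⟩, hyeq⟩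
    have hsub : y - xhat ∈ stoichSpan d S.E := by
      rw [← sub_sub_sub_cancel_right y xhat x₀]
      exact sub_mem hyspan hxhspan
    exact S17.equil_unique S hsub hyeq hxheq
  · rintro ⟨z, hzspan, hzpos⟩ x ⟨hxspan, hxnn⟩ hxeq i
    have heqj : ∀ j, (x ᵥ* S.A) j + S.b j = 0 := by
      intro j
      have := congrFun hxeq j
      simpa using this
    by_cases hi : S17.IZ S i
    · exact S17.pos_IZ S hxnn heqj i hi
    · -- class positivity
      have hbz : ∀ j ∈ S17.cls S i, S.b j = 0 := fun j hj =>
        S17.b_zero_N S (S17.cls_not_IZ S hi hj)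
      have heqc : ∀ j ∈ S17.cls S i, (x ᵥ* S.A) j = 0 := by
        intro j hj
        have := heqj j
        rw [hbz j hj] at this
        linarith
      have hxCA := S17.cls_restrict S hi x heqc
      set xC : Vec d := fun k => if k ∈ S17.cls S i then x k else 0 with hxC
      have hsupp : ∀ k, k ∉ S17.cls S i → xC k = 0 := fun k hk => if_neg hk
      have hsumxz : ∑ k ∈ S17.cls S i, x k = ∑ k ∈ S17.cls S i, z k := by
        have hmem : x - z ∈ stoichSpan d S.E := by
          rw [← sub_sub_sub_cancel_right x z x₀]
          exact sub_mem hxspan hzspan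
        have := S17.span_clsSum S hi (x - z) hmem
        have h2 : ∑ k ∈ S17.cls S i, (x - z) k
            = ∑ k ∈ S17.cls S i, x k - ∑ k ∈ S17.cls S i, z k := by
          simp [Finset.sum_sub_distrib]
        rw [h2] at this
        linarith
      have hpos : 0 < ∑ k ∈ S17.cls S i, z k :=
        Finset.sum_pos (fun k _ => hzpos k) ⟨i, S17.mem_self_cls S i⟩
      have hxCne : xC ≠ 0 := by
        intro h0
        have : ∑ k ∈ S17.cls S i, xC k = 0 := by rw [h0]; simp
        have h2 : ∑ k ∈ S17.cls S i, xC k = ∑ k ∈ S17.cls S i, x k :=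
          Finset.sum_congr rfl (fun k hk => by rw [hxC]; simp only; rw [if_pos hk])
        rw [h2, hsumxz] at this
        linarith
      rcases S17.CL_sign S hi hsupp hxCA hxCne with hp | hn
      · have := hp i (S17.mem_self_cls S i)
        rw [hxC] at this
        simp only at this
        rw [if_pos (S17.mem_self_cls S i)] at this
        exact this
      · exfalso
        have := hn i (S17.mem_self_cls S i)
        rw [hxC] at this
        simp only at this
        rw [if_pos (S17.mem_self_cls S i)] at this
        exact absurd this (not_lt.2 (hxnn i))
end

section
/- A first order endotactic mass-action system (on ℕ₀^d, with no redundant species) is weakly reversible of deficiency zero if and only if it is monomolecular (every vertex has ℓ₁-norm ≤ 1). -/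
open Matrix Finset
open scoped Matrix Classical

def SCCeq {d : ℕ} (E : Finset (Edge d)) (a b : Vec d) : Prop :=
  Reach E a b ∧ Reach E b a

noncomputable def vertexFinset {d : ℕ} (E : Finset (Edge d)) : Finset (Vec d) :=
  E.image Prod.fst ∪ E.image Prod.snd

noncomputable def sccClass {d : ℕ} (E : Finset (Edge d)) (y : Vec d) : Finset (Vec d) :=
  (vertexFinset E).filter (fun z => SCCeq E y z)

noncomputable def numNontrivialSCC {d : ℕ} (E : Finset (Edge d)) : ℕ :=
  (((vertexFinset E).image (sccClass E)).filter (fun C => 2 ≤ C.card)).card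

def DeficiencyZero {d : ℕ} (E : Finset (Edge d)) : Prop :=
  (vertexFinset E).card = Module.finrank ℝ (stoichSpan d E) + numNontrivialSCC E

def WeaklyReversible {d : ℕ} (E : Finset (Edge d)) : Prop :=
  ∀ e ∈ E, Reach E e.2 e.1

-- AUX
noncomputable def ev {d : ℕ} (i : Fin d) : Vec d := Pi.single i 1

lemma ev_apply {d : ℕ} (i j : Fin d) : ev i j = if j = i then (1:ℝ) else 0 :=
  Pi.single_apply i 1 j

lemma ev_inj {d : ℕ} : Function.Injective (ev (d := d)) := by
  intro i j h
  by_contra hne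
  have := congrFun h i
  rw [ev_apply, ev_apply, if_pos rfl, if_neg hne] at this
  norm_num at this

lemma zero_ne_ev {d : ℕ} (i : Fin d) : (0 : Vec d) ≠ ev i := by
  intro h
  have := congrFun h i
  simp [ev_apply] at this

lemma ev_dot {d : ℕ} (i : Fin d) (u : Vec d) : ev i ⬝ᵥ u = u i := by
  simp [dotProduct, ev_apply, ite_mul, Finset.sum_ite_eq']

lemma mem_vertexFinset_iff {d : ℕ} {E : Finset (Edge d)} {y : Vec d} :
    y ∈ vertexFinset E ↔ InV E y := by
  simp only [vertexFinset, Finset.mem_union, Finset.mem_image, InV]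
  constructor
  · rintro (⟨e, he, h⟩ | ⟨e, he, h⟩)
    · exact ⟨e, he, Or.inl h⟩
    · exact ⟨e, he, Or.inr h⟩
  · rintro ⟨e, he, h | h⟩
    · exact Or.inl ⟨e, he, h⟩
    · exact Or.inr ⟨e, he, h⟩

lemma vertex_form {d : ℕ} {E : Finset (Edge d)} {y : Vec d}
    (hnat : ∀ y, InV E y → ∀ i, ∃ n : ℕ, y i = (n : ℝ))
    (hmono : ∀ y, InV E y → ∑ i, y i ≤ 1)
    (hy : InV E y) : y = 0 ∨ ∃ i, y = ev i := by
  choose n hn using hnat y hy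
  have hsum : (∑ i, n i : ℕ) ≤ 1 := by
    have h := hmono y hy
    have h2 : ((∑ i, n i : ℕ) : ℝ) ≤ (1:ℝ) := by
      push_cast
      calc (∑ i, (n i : ℝ)) = ∑ i, y i :=
            Finset.sum_congr rfl fun i _ => (hn i).symm
        _ ≤ 1 := h
    exact_mod_cast h2
  rcases Nat.le_one_iff_eq_zero_or_eq_one.mp hsum with h0 | h1
  · left
    funext i
    have : n i = 0 := by
      have := Finset.sum_eq_zero_iff.mp h0 i (Finset.mem_univ i)
      exact this
    simp [hn i, this]
  · right
    have hex : ∃ i, n i ≠ 0 := by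
      by_contra hc
      push_neg at hc
      rw [Finset.sum_eq_zero (fun i _ => hc i)] at h1
      exact absurd h1 (by norm_num)
    obtain ⟨i, hi⟩ := hex
    have hile : n i ≤ 1 := h1 ▸ Finset.single_le_sum (f := n) (fun j _ => Nat.zero_le _) (Finset.mem_univ i)
    have hni : n i = 1 := le_antisymm hile (Nat.one_le_iff_ne_zero.mpr hi)
    refine ⟨i, funext fun j => ?_⟩
    rw [ev_apply]
    by_cases hj : j = i
    · subst hj; simp [hn j, hni]
    · have hnj : n j = 0 := by
        by_contra hnj
        have hpair : n i + n j ≤ ∑ k, n k := by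
          have := Finset.sum_le_sum_of_subset (f := n)
            (Finset.subset_univ ({i, j} : Finset (Fin d)))
          rwa [Finset.sum_pair (Ne.symm hj)] at this
        omega
      simp [hn j, hnj, hj]

lemma sccClass_congr {d : ℕ} {E : Finset (Edge d)} {a b : Vec d}
    (h : SCCeq E a b) : sccClass E a = sccClass E b := by
  unfold sccClass
  apply Finset.filter_congr
  intro z _
  constructor
  · rintro ⟨h1, h2⟩
    exact ⟨(h.2).trans h1, h2.trans h.1⟩
  · rintro ⟨h1, h2⟩
    exact ⟨(h.1).trans h1, h2.trans h.2⟩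

lemma mem_sccClass_iff {d : ℕ} {E : Finset (Edge d)} {y z : Vec d} :
    z ∈ sccClass E y ↔ z ∈ vertexFinset E ∧ SCCeq E y z := Finset.mem_filter

lemma self_mem_sccClass {d : ℕ} {E : Finset (Edge d)} {y : Vec d}
    (hy : y ∈ vertexFinset E) : y ∈ sccClass E y :=
  mem_sccClass_iff.mpr ⟨hy, Relation.ReflTransGen.refl, Relation.ReflTransGen.refl⟩

lemma reach_sub_mem {d : ℕ} {E : Finset (Edge d)} {p q : Vec d}
    (h : Reach E p q) : q - p ∈ stoichSpan d E := by
  induction h with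
  | refl => simp
  | @tail b c hb hbc ih =>
      have h1 : c - b ∈ stoichSpan d E :=
        Submodule.subset_span ⟨(b, c), hbc, rfl⟩
      have := Submodule.add_mem _ h1 ih
      rwa [sub_add_sub_cancel] at this

lemma wr_of_mono {d : ℕ} {E : Finset (Edge d)}
    (hnat : ∀ y, InV E y → ∀ i, ∃ n : ℕ, y i = (n : ℝ))
    (hmono : ∀ y, InV E y → ∑ i, y i ≤ 1)
    (hendo : Endotactic E) : WeaklyReversible E := by
  rintro ⟨a, b⟩ he
  simp only
  by_contra hreach
  set c : ℝ := if Reach E b 0 then 0 else 1 with hc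
  set u : Vec d := fun i => if Reach E b (ev i) then c else c - 1 with hu
  have hval : ∀ y, InV E y → y ⬝ᵥ u = if Reach E b y then c else c - 1 := by
    intro y hy
    rcases vertex_form hnat hmono hy with rfl | ⟨i, rfl⟩
    · rw [zero_dotProduct]
      by_cases h0 : Reach E b 0 <;> simp [hc, h0]
    · rw [ev_dot, hu]
  apply hendo u
  have hInVa : InV E a := ⟨(a, b), he, Or.inl rfl⟩
  have hInVb : InV E b := ⟨(a, b), he, Or.inr rfl⟩
  have hvala : a ⬝ᵥ u = c - 1 := by rw [hval a hInVa, if_neg hreach]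
  have hvalb : b ⬝ᵥ u = c := by rw [hval b hInVb, if_pos (show Reach E b b from Relation.ReflTransGen.refl)]
  refine ⟨a, b, he, ?_, ?_⟩
  · rw [sub_dotProduct, hvala, hvalb]; ring_nf; norm_num
  · rintro z ⟨z', hz', hdz⟩
    have hInVz : InV E z := ⟨(z, z'), hz', Or.inl rfl⟩
    have hInVz' : InV E z' := ⟨(z, z'), hz', Or.inr rfl⟩
    have hznr : ¬ Reach E b z := by
      intro hr
      apply hdz
      rw [sub_dotProduct, hval z hInVz, hval z' hInVz', if_pos hr,
        if_pos (show Reach E b z' from hr.tail hz'), sub_self]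
    rw [hval z hInVz, if_neg hznr, hvala]

lemma source_of_inV {d : ℕ} {E : Finset (Edge d)}
    (hsimple : ∀ e ∈ E, e.1 ≠ e.2) (hWR : WeaklyReversible E)
    {y : Vec d} (hy : InV E y) : IsSource E y := by
  obtain ⟨e, he, h | h⟩ := hy
  · exact ⟨e.2, h ▸ he⟩
  · have hr : Reach E y e.1 := h ▸ hWR e he
    rcases (Relation.ReflTransGen.cases_head hr) with heq | ⟨m, hm, _⟩
    · exact absurd (heq ▸ h).symm (hsimple e he)
    · exact ⟨m, hm⟩

lemma sum_smul_ev {d : ℕ} (v : Vec d) : (∑ i, v i • ev i) = v := by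
  funext j
  rw [Finset.sum_apply]
  simp only [Pi.smul_apply, ev_apply, smul_eq_mul, mul_ite, mul_one, mul_zero]
  rw [Finset.sum_ite_eq]
  simp

lemma defzero {d : ℕ} {E : Finset (Edge d)}
    (hsimple : ∀ e ∈ E, e.1 ≠ e.2)
    (hnat : ∀ y, InV E y → ∀ i, ∃ n : ℕ, y i = (n : ℝ))
    (hmono : ∀ y, InV E y → ∑ i, y i ≤ 1)
    (hnored : ∀ i : Fin d, ∃ e ∈ E, e.2 i ≠ e.1 i)
    (hWR : WeaklyReversible E) : DeficiencyZero E := by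
  classical
  unfold DeficiencyZero numNontrivialSCC
  have vform : ∀ y, InV E y → y = 0 ∨ ∃ i, y = ev i := fun y hy =>
    vertex_form hnat hmono hy
  have hscc_edge : ∀ e ∈ E, SCCeq E e.1 e.2 := fun e he =>
    ⟨Relation.ReflTransGen.single he, hWR e he⟩
  have hevV : ∀ i, ev i ∈ vertexFinset E := by
    intro i
    obtain ⟨e, he, hi⟩ := hnored i
    have h1 : InV E e.1 := ⟨e, he, Or.inl rfl⟩
    have h2 : InV E e.2 := ⟨e, he, Or.inr rfl⟩
    have hx : ∃ x, InV E x ∧ x i ≠ 0 := by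
      by_cases h : e.2 i = 0
      · exact ⟨e.1, h1, fun h' => hi (by rw [h, h'])⟩
      · exact ⟨e.2, h2, h⟩
    obtain ⟨x, hxV, hxi⟩ := hx
    rcases vform x hxV with rfl | ⟨j, rfl⟩
    · exact absurd rfl hxi
    · have hji : j = i := by
        by_contra hji
        apply hxi
        rw [ev_apply, if_neg (Ne.symm hji)]
      rw [← hji]
      exact mem_vertexFinset_iff.mpr hxV
  set Classes := (vertexFinset E).image (sccClass E) with hClasses
  have hclass_mem : ∀ C ∈ Classes, ∀ x ∈ C, C = sccClass E x := by
    intro C hC x hx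
    obtain ⟨y, hyV, rfl⟩ := Finset.mem_image.mp hC
    exact sccClass_congr (mem_sccClass_iff.mp hx).2
  have hcard2 : ∀ C ∈ Classes, 2 ≤ C.card := by
    intro C hC
    obtain ⟨y, hyV, rfl⟩ := Finset.mem_image.mp hC
    obtain ⟨e, he, hy⟩ := mem_vertexFinset_iff.mp hyV
    have he1V : e.1 ∈ vertexFinset E := mem_vertexFinset_iff.mpr ⟨e, he, Or.inl rfl⟩
    have he2V : e.2 ∈ vertexFinset E := mem_vertexFinset_iff.mpr ⟨e, he, Or.inr rfl⟩
    have hsc := hscc_edge e he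
    have h1 : e.1 ∈ sccClass E y := by
      rcases hy with rfl | rfl
      · exact self_mem_sccClass hyV
      · exact mem_sccClass_iff.mpr ⟨he1V, ⟨hsc.2, hsc.1⟩⟩
    have h2 : e.2 ∈ sccClass E y := by
      rcases hy with rfl | rfl
      · exact mem_sccClass_iff.mpr ⟨he2V, hsc⟩
      · exact self_mem_sccClass hyV
    exact Finset.one_lt_card.mpr ⟨e.1, h1, e.2, h2, hsimple e he⟩
  have hnum : (Classes.filter (fun C => 2 ≤ C.card)).card = Classes.card := by
    rw [Finset.filter_true_of_mem hcard2]
  have hmemC : ∀ C ∈ Classes, ∀ i : Fin d, (ev i ∈ C ↔ C = sccClass E (ev i)) := by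
    intro C hC i
    constructor
    · exact hclass_mem C hC (ev i)
    · rintro rfl
      exact self_mem_sccClass (hevV i)
  set idx : Finset (Vec d) → Finset (Fin d) :=
    fun C => Finset.univ.filter (fun i => ev i ∈ C) with hidx
  have hidx_mem : ∀ C i, i ∈ idx C ↔ ev i ∈ C := by
    intro C i; simp [hidx]
  set rep : Finset (Vec d) → Vec d := fun C =>
    if h : (idx C).Nonempty then ev ((idx C).min' h) else 0 with hrepdef
  have hrep_mem : ∀ C, (idx C).Nonempty → rep C ∈ C ∧ ∃ j, rep C = ev j := by
    intro C h
    rw [hrepdef]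
    simp only
    rw [dif_pos h]
    exact ⟨(hidx_mem C _).mp ((idx C).min'_mem h), _, rfl⟩
  set ZF := Classes.filter (fun C => ¬ (0:Vec d) ∈ C) with hZF
  have hZFClasses : ∀ C : {C // C ∈ ZF}, C.1 ∈ Classes ∧ (0:Vec d) ∉ C.1 :=
    fun C => Finset.mem_filter.mp C.2
  have hidxne : ∀ C ∈ Classes, (0:Vec d) ∉ C → (idx C).Nonempty := by
    intro C hC h0
    obtain ⟨y, hyV, rfl⟩ := Finset.mem_image.mp hC
    have hy : y ∈ sccClass E y := self_mem_sccClass hyV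
    rcases vform y (mem_vertexFinset_iff.mp hyV) with rfl | ⟨i, rfl⟩
    · exact absurd hy h0
    · exact ⟨i, (hidx_mem _ i).mpr hy⟩
  let T : Vec d →ₗ[ℝ] ({C // C ∈ ZF} → ℝ) :=
    { toFun := fun v C => ∑ i ∈ idx C.1, v i
      map_add' := fun v w => by funext C; exact Finset.sum_add_distrib
      map_smul' := fun r v => by funext C; simp [Finset.mul_sum] }
  have hTev : ∀ (j : Fin d) (C : {C // C ∈ ZF}),
      T (ev j) C = if ev j ∈ C.1 then 1 else 0 := by
    intro j C
    show (∑ i ∈ idx C.1, ev j i) = _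
    rw [Finset.sum_congr rfl (fun i _ => ev_apply j i),
      Finset.sum_ite_eq' (idx C.1) j (fun _ => (1:ℝ)),
      if_congr (hidx_mem C.1 j) rfl rfl]
  have hTvert : ∀ y, InV E y → ∀ C : {C // C ∈ ZF},
      T y C = if y ∈ C.1 then 1 else 0 := by
    intro y hy C
    rcases vform y hy with rfl | ⟨j, rfl⟩
    · rw [if_neg (hZFClasses C).2]
      show (∑ i ∈ idx C.1, (0:Vec d) i) = 0
      exact Finset.sum_eq_zero fun i _ => rfl
    · exact hTev j C
  have hedge_iff : ∀ C ∈ Classes, ∀ e ∈ E, (e.1 ∈ C ↔ e.2 ∈ C) := by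
    intro C hC e he
    have he1V : e.1 ∈ vertexFinset E := mem_vertexFinset_iff.mpr ⟨e, he, Or.inl rfl⟩
    have he2V : e.2 ∈ vertexFinset E := mem_vertexFinset_iff.mpr ⟨e, he, Or.inr rfl⟩
    constructor
    · intro h1
      rw [hclass_mem C hC e.1 h1]
      exact mem_sccClass_iff.mpr ⟨he2V, hscc_edge e he⟩
    · intro h2
      rw [hclass_mem C hC e.2 h2]
      exact mem_sccClass_iff.mpr ⟨he1V, ⟨(hscc_edge e he).2, (hscc_edge e he).1⟩⟩
  have hker : stoichSpan d E = LinearMap.ker T := by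
    apply le_antisymm
    · rw [stoichSpan, Submodule.span_le]
      rintro v ⟨e, he, rfl⟩
      simp only [SetLike.mem_coe, LinearMap.mem_ker]
      rw [map_sub]
      funext C
      simp only [Pi.sub_apply, Pi.zero_apply]
      rw [hTvert e.1 ⟨e, he, Or.inl rfl⟩ C, hTvert e.2 ⟨e, he, Or.inr rfl⟩ C,
        if_congr (hedge_iff C.1 (hZFClasses C).1 e he) rfl rfl, sub_self]
    · intro v hv
      have hv0 : ∀ C : {C // C ∈ ZF}, ∑ i ∈ idx C.1, v i = 0 :=
        fun C => congrFun (LinearMap.mem_ker.mp hv) C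
      set r : Fin d → Vec d := fun i =>
        if (0:Vec d) ∈ sccClass E (ev i) then 0 else rep (sccClass E (ev i)) with hrdef
      have hrC : ∀ i, r i ∈ sccClass E (ev i) := by
        intro i
        rw [hrdef]
        simp only
        by_cases h0 : (0:Vec d) ∈ sccClass E (ev i)
        · rw [if_pos h0]; exact h0
        · rw [if_neg h0]
          have hne : (idx (sccClass E (ev i))).Nonempty :=
            ⟨i, (hidx_mem _ i).mpr (self_mem_sccClass (hevV i))⟩
          exact (hrep_mem _ hne).1
      have hdecomp : v = (∑ i, v i • (ev i - r i)) + ∑ i, v i • r i := by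
        rw [← Finset.sum_add_distrib]
        rw [Finset.sum_congr rfl (fun i (_ : i ∈ Finset.univ) => by
          rw [← smul_add, sub_add_cancel])]
        exact (sum_smul_ev v).symm
      have hmem1 : (∑ i, v i • (ev i - r i)) ∈ stoichSpan d E := by
        apply Submodule.sum_mem
        intro i _
        apply Submodule.smul_mem
        have hsc : SCCeq E (ev i) (r i) := (mem_sccClass_iff.mp (hrC i)).2
        exact reach_sub_mem hsc.2
      have hzero : (∑ i, v i • r i) = 0 := by
        have hmaps : ∀ i ∈ (Finset.univ : Finset (Fin d)), sccClass E (ev i) ∈ Classes :=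
          fun i _ => Finset.mem_image.mpr ⟨ev i, hevV i, rfl⟩
        rw [← Finset.sum_fiberwise_of_maps_to hmaps (fun i => v i • r i)]
        apply Finset.sum_eq_zero
        intro C hC
        have hfiber : ∀ i ∈ Finset.univ.filter (fun i => sccClass E (ev i) = C),
            v i • r i = v i • (if (0:Vec d) ∈ C then 0 else rep C) := by
          intro i hi
          rw [hrdef]
          simp only
          rw [(Finset.mem_filter.mp hi).2]
        rw [Finset.sum_congr rfl hfiber]
        by_cases h0 : (0:Vec d) ∈ C
        · simp [h0]
        · rw [Finset.sum_congr rfl (fun i (_ : i ∈ _) => by rw [if_neg h0])]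
          have hCZF : C ∈ ZF := Finset.mem_filter.mpr ⟨hC, h0⟩
          have hfeq : Finset.univ.filter (fun i => sccClass E (ev i) = C) = idx C := by
            apply Finset.filter_congr
            intro i _
            exact ⟨fun h => (hmemC C hC i).mpr h.symm, fun h => ((hmemC C hC i).mp h).symm⟩
          rw [hfeq, ← Finset.sum_smul, hv0 ⟨C, hCZF⟩, zero_smul]
      rw [hdecomp, hzero, add_zero]
      exact hmem1
  have hTsurj : Function.Surjective T := by
    intro w
    refine ⟨∑ C' : {C // C ∈ ZF}, w C' • rep C'.1, ?_⟩
    rw [map_sum]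
    funext C
    rw [Finset.sum_apply]
    have hterm : ∀ C' : {C // C ∈ ZF},
        (T (w C' • rep C'.1)) C = if C' = C then w C' else 0 := by
      intro C'
      rw [_root_.map_smul]
      have hne : (idx C'.1).Nonempty := hidxne C'.1 (hZFClasses C').1 (hZFClasses C').2
      obtain ⟨hrCmem, j, hj⟩ := hrep_mem C'.1 hne
      rw [Pi.smul_apply, hj, hTev j C, smul_eq_mul]
      have hiff : (ev j ∈ C.1) ↔ C' = C := by
        constructor
        · intro h
          exact Subtype.ext (((hmemC C'.1 (hZFClasses C').1 j).mp (hj ▸ hrCmem)).trans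
            ((hmemC C.1 (hZFClasses C).1 j).mp h).symm)
        · rintro rfl
          exact hj ▸ hrCmem
      rw [mul_ite, mul_one, mul_zero, if_congr hiff rfl rfl]
    rw [Finset.sum_congr rfl (fun C' _ => hterm C'),
      Finset.sum_ite_eq' Finset.univ C w, if_pos (Finset.mem_univ C)]
  have hrank := LinearMap.finrank_range_add_finrank_ker T
  rw [LinearMap.range_eq_top.mpr hTsurj, finrank_top] at hrank
  simp only [Module.finrank_fintype_fun_eq_card, Fintype.card_coe, Fintype.card_fin] at hrank
  have hfr : Module.finrank ℝ (stoichSpan d E) = Module.finrank ℝ (LinearMap.ker T) := by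
    rw [hker]
  by_cases h0V : (0:Vec d) ∈ vertexFinset E
  · have hVeq : vertexFinset E = insert 0 (Finset.univ.image ev) := by
      apply Finset.Subset.antisymm
      · intro x hx
        rcases vform x (mem_vertexFinset_iff.mp hx) with rfl | ⟨i, rfl⟩
        · exact Finset.mem_insert_self _ _
        · exact Finset.mem_insert_of_mem (Finset.mem_image_of_mem _ (Finset.mem_univ i))
      · intro x hx
        rcases Finset.mem_insert.mp hx with rfl | hx
        · exact h0V
        · obtain ⟨i, _, rfl⟩ := Finset.mem_image.mp hx
          exact hevV i
    have h0img : (0:Vec d) ∉ Finset.univ.image ev := by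
      intro h
      obtain ⟨i, _, hi⟩ := Finset.mem_image.mp h
      exact zero_ne_ev i hi.symm
    have hcardV : (vertexFinset E).card = d + 1 := by
      rw [hVeq, Finset.card_insert_of_notMem h0img,
        Finset.card_image_of_injective _ ev_inj, Finset.card_univ, Fintype.card_fin]
    have hfilter : Classes.filter (fun C => (0:Vec d) ∈ C) = {sccClass E 0} := by
      apply Finset.Subset.antisymm
      · intro C hC
        obtain ⟨hCc, h0C⟩ := Finset.mem_filter.mp hC
        exact Finset.mem_singleton.mpr (hclass_mem C hCc 0 h0C)
      · intro C hC
        rw [Finset.mem_singleton] at hC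
        subst hC
        exact Finset.mem_filter.mpr
          ⟨Finset.mem_image.mpr ⟨0, h0V, rfl⟩, self_mem_sccClass h0V⟩
    have hsplit := Finset.card_filter_add_card_filter_not
      (s := Classes) (p := fun C => (0:Vec d) ∈ C)
    rw [hfilter, Finset.card_singleton] at hsplit
    have hZFcard : (Classes.filter (fun C => ¬ (0:Vec d) ∈ C)).card = ZF.card := rfl
    rw [hcardV, hfr, hnum]
    omega
  · have hVeq : vertexFinset E = Finset.univ.image ev := by
      apply Finset.Subset.antisymm
      · intro x hx
        rcases vform x (mem_vertexFinset_iff.mp hx) with rfl | ⟨i, rfl⟩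
        · exact absurd hx h0V
        · exact Finset.mem_image_of_mem _ (Finset.mem_univ i)
      · intro x hx
        obtain ⟨i, _, rfl⟩ := Finset.mem_image.mp hx
        exact hevV i
    have hcardV : (vertexFinset E).card = d := by
      rw [hVeq, Finset.card_image_of_injective _ ev_inj, Finset.card_univ, Fintype.card_fin]
    have hfilter : Classes.filter (fun C => (0:Vec d) ∈ C) = ∅ := by
      rw [Finset.filter_eq_empty_iff]
      intro C hC h0C
      obtain ⟨y, hyV, rfl⟩ := Finset.mem_image.mp hC
      exact h0V (mem_sccClass_iff.mp h0C).1
    have hsplit := Finset.card_filter_add_card_filter_not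
      (s := Classes) (p := fun C => (0:Vec d) ∈ C)
    rw [hfilter, Finset.card_empty] at hsplit
    have hZFcard : (Classes.filter (fun C => ¬ (0:Vec d) ∈ C)).card = ZF.card := rfl
    rw [hcardV, hfr, hnum]
    omega

/-- A first order endotactic mass-action system is weakly reversible of
deficiency zero iff it is monomolecular (all vertices of `ℓ₁`-norm `≤ 1`). -/
theorem stmt18 {d : ℕ} (E : Finset (Edge d))
    (hsimple : ∀ e ∈ E, e.1 ≠ e.2)
    (hnat : ∀ y, InV E y → ∀ i, ∃ n : ℕ, y i = (n : ℝ))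
    (hfo : ∀ y, IsSource E y → ∑ i, y i ≤ 1)
    (hnored : ∀ i : Fin d, ∃ e ∈ E, e.2 i ≠ e.1 i)
    (hendo : Endotactic E) :
    (WeaklyReversible E ∧ DeficiencyZero E) ↔ (∀ y, InV E y → ∑ i, y i ≤ 1) := by
  constructor
  · rintro ⟨hWR, _⟩ y hy
    exact hfo y (source_of_inV hsimple hWR hy)
  · intro hmono
    have hWR := wr_of_mono hnat hmono hendo
    exact ⟨hWR, defzero hsimple hnat hmono hnored hWR⟩
end
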